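/- arXiv:1708.03654 — 9 statements merged into one kernel-verified Lean document; each statement's English description precedes it below -/
import Mathlib

section
/- For q ≥ 2, in any linear sequence of length mq^k + k - 1 over an alphabet of size q in which every k-mer occurs exactly m times as a (contiguous) substring, the first (k-1) characters equal the last (k-1) characters. -/
/-- The k-mer (window of length k) of a linear sequence of length m*q^k + k - 1
starting at position i, for i among the m*q^k starting positions. -/
def linWin (m q k : ℕ) (s : Fin (m * q ^ k + k - 1) → Fin q)
    (i : Fin (m * q ^ k)) : Fin k → Fin q :=
  fun j => s ⟨(i : ℕ) + (j : ℕ), by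
    have hi := i.isLt; have hj := j.isLt; omega⟩

namespace MDBaux

variable {m q k : ℕ}

/-- Window of length k-1 starting at position i, for i in 0..m*q^k. -/
def winAt (s : Fin (m * q ^ k + k - 1) → Fin q) (i : Fin (m * q ^ k + 1)) :
    Fin (k - 1) → Fin q :=
  fun j => s ⟨(i : ℕ) + (j : ℕ), by have := i.isLt; have := j.isLt; omega⟩

def prefF (v : Fin k → Fin q) : Fin (k - 1) → Fin q :=
  fun j => v ⟨(j : ℕ), by have := j.isLt; omega⟩

def sufF (v : Fin k → Fin q) : Fin (k - 1) → Fin q :=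
  fun j => v ⟨(j : ℕ) + 1, by have := j.isLt; omega⟩

def extL (w : Fin (k - 1) → Fin q) (a : Fin q) : Fin k → Fin q :=
  fun j => if h : (j : ℕ) < k - 1 then w ⟨j, h⟩ else a

def extR (w : Fin (k - 1) → Fin q) (a : Fin q) : Fin k → Fin q :=
  fun j => if h : (j : ℕ) = 0 then a else w ⟨(j : ℕ) - 1, by have := j.isLt; omega⟩

lemma prefF_eq_iff (hk : 1 ≤ k) (v : Fin k → Fin q) (w : Fin (k - 1) → Fin q) :
    prefF v = w ↔ ∃ a, v = extL w a := by
  constructor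
  · intro h
    refine ⟨v ⟨k - 1, by omega⟩, funext fun j => ?_⟩
    unfold extL
    split
    · next hj =>
      rw [← h]
      rfl
    · next hj =>
      have hj' : j = ⟨k - 1, by omega⟩ := Fin.ext (by
        have := j.isLt
        show (j : ℕ) = k - 1
        omega)
      rw [hj']
  · rintro ⟨a, rfl⟩
    funext j
    show extL w a ⟨(j : ℕ), _⟩ = w j
    unfold extL
    rw [dif_pos j.isLt]

lemma sufF_eq_iff (hk : 1 ≤ k) (v : Fin k → Fin q) (w : Fin (k - 1) → Fin q) :
    sufF v = w ↔ ∃ a, v = extR w a := by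
  constructor
  · intro h
    refine ⟨v ⟨0, by omega⟩, funext fun j => ?_⟩
    unfold extR
    split
    · next hj =>
      have hj' : j = ⟨0, by omega⟩ := Fin.ext hj
      rw [hj']
    · next hj =>
      rw [← h]
      show v j = v _
      congr 1
      apply Fin.ext
      show (j : ℕ) = (j : ℕ) - 1 + 1
      omega
  · rintro ⟨a, rfl⟩
    funext j
    show extR w a ⟨(j : ℕ) + 1, _⟩ = w j
    unfold extR
    rw [dif_neg (Nat.succ_ne_zero _)]
    exact congrArg w (Fin.ext rfl)

lemma extL_inj (hk : 2 ≤ k) (w : Fin (k - 1) → Fin q) {a b : Fin q}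
    (h : extL w a = extL w b) : a = b := by
  have := congrFun h ⟨k - 1, by omega⟩
  simpa [extL] using this

lemma extR_inj (hk : 1 ≤ k) (w : Fin (k - 1) → Fin q) {a b : Fin q}
    (h : extR w a = extR w b) : a = b := by
  have := congrFun h ⟨0, by omega⟩
  simpa [extR] using this

lemma count_ext (hk : 2 ≤ k) (s : Fin (m * q ^ k + k - 1) → Fin q)
    (hs : ∀ y : Fin k → Fin q,
      (Finset.univ.filter (fun i : Fin (m * q ^ k) => linWin m q k s i = y)).card = m)
    (F : (Fin k → Fin q) → (Fin (k - 1) → Fin q))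
    (E : (Fin (k - 1) → Fin q) → Fin q → (Fin k → Fin q))
    (hFE : ∀ v w, F v = w ↔ ∃ a, v = E w a)
    (hEinj : ∀ w a b, E w a = E w b → a = b)
    (w : Fin (k - 1) → Fin q) :
    (Finset.univ.filter (fun i : Fin (m * q ^ k) => F (linWin m q k s i) = w)).card
      = q * m := by
  have hset : (Finset.univ.filter (fun i : Fin (m * q ^ k) => F (linWin m q k s i) = w))
      = Finset.univ.biUnion (fun a : Fin q =>
          Finset.univ.filter (fun i : Fin (m * q ^ k) => linWin m q k s i = E w a)) := by
    ext i
    simp only [Finset.mem_filter, Finset.mem_biUnion, Finset.mem_univ, true_and]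
    rw [hFE]
  rw [hset, Finset.card_biUnion]
  · simp only [hs]
    simp [Finset.sum_const, Finset.card_univ]
  · intro a _ b _ hab
    refine Finset.disjoint_left.2 fun i hi hi' => ?_
    simp only [Finset.mem_filter] at hi hi'
    exact hab (hEinj w a b (hi.2 ▸ hi'.2))

end MDBaux

/-- For q ≥ 2, in any linear sequence of length m*q^k + k - 1 over an
alphabet of size q in which every k-mer occurs exactly m times as a contiguous
substring, the first k-1 characters equal the last k-1 characters. -/
theorem linear_mdb_first_eq_last (m q k : ℕ) (hm : 1 ≤ m) (hq : 2 ≤ q) (hk : 1 ≤ k)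
    (s : Fin (m * q ^ k + k - 1) → Fin q)
    (hs : ∀ y : Fin k → Fin q,
      (Finset.univ.filter (fun i : Fin (m * q ^ k) => linWin m q k s i = y)).card = m) :
    ∀ j : Fin (k - 1),
      s ⟨(j : ℕ), by
          have hj := j.isLt
          have h1 : 0 < m * q ^ k := Nat.mul_pos hm (pow_pos (by omega) k)
          omega⟩
      = s ⟨m * q ^ k + (j : ℕ), by have hj := j.isLt; omega⟩ := by
  intro j
  have hk2 : 2 ≤ k := by have := j.isLt; omega
  have hN : 1 ≤ m * q ^ k := Nat.one_le_iff_ne_zero.2 (by positivity)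
  open MDBaux in
  have hpref : ∀ w, (Finset.univ.filter
      (fun i : Fin (m * q ^ k) => prefF (linWin m q k s i) = w)).card = q * m :=
    fun w => count_ext hk2 s hs prefF extL (prefF_eq_iff hk)
      (fun w a b h => extL_inj hk2 w h) w
  have hsuf : ∀ w, (Finset.univ.filter
      (fun i : Fin (m * q ^ k) => sufF (linWin m q k s i) = w)).card = q * m :=
    fun w => count_ext hk2 s hs sufF extR (sufF_eq_iff hk)
      (fun w a b h => extR_inj hk w h) w
  have hwinPref : ∀ (i : Fin (m * q ^ k)),
      MDBaux.winAt s ⟨(i : ℕ), by have := i.isLt; omega⟩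
        = MDBaux.prefF (linWin m q k s i) := by
    intro i
    funext j'
    rfl
  have hwinSuf : ∀ (i : Fin (m * q ^ k)),
      MDBaux.winAt s ⟨(i : ℕ) + 1, by have := i.isLt; omega⟩
        = MDBaux.sufF (linWin m q k s i) := by
    intro i
    funext j'
    show s _ = s _
    congr 1
    exact Fin.ext (by show (i:ℕ) + 1 + j' = (i:ℕ) + (j' + 1); omega)
  set w0 : Fin (k - 1) → Fin q := MDBaux.winAt s ⟨0, by omega⟩ with hw0
  set S : Finset (Fin (m * q ^ k + 1)) :=
    Finset.univ.filter (fun i => MDBaux.winAt s i = w0) with hS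
  have h0S : (⟨0, by omega⟩ : Fin (m * q ^ k + 1)) ∈ S :=
    Finset.mem_filter.2 ⟨Finset.mem_univ _, rfl⟩
  have hA : (S.erase ⟨m * q ^ k, by omega⟩).card = q * m := by
    rw [← hpref w0]
    refine (Finset.card_bij'
      (i := fun (b : Fin (m * q ^ k + 1)) (hb : b ∈ S.erase ⟨m * q ^ k, by omega⟩) =>
        (⟨(b : ℕ), by
          have h1 : b ≠ (⟨m * q ^ k, by omega⟩ : Fin (m * q ^ k + 1)) :=
            Finset.ne_of_mem_erase hb
          have h2 := b.isLt
          have h3 : (b : ℕ) ≠ m * q ^ k := fun h => h1 (Fin.ext h)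
          omega⟩ : Fin (m * q ^ k)))
      (j := fun (a : Fin (m * q ^ k)) (_ : a ∈ _) =>
        (⟨(a : ℕ), by have := a.isLt; omega⟩ : Fin (m * q ^ k + 1)))
      ?_ ?_ ?_ ?_)
    · intro b hb
      have hb' := (Finset.mem_filter.1 (Finset.mem_of_mem_erase hb)).2
      simp only [Finset.mem_filter, Finset.mem_univ, true_and]
      refine Eq.trans ?_ hb'
      exact (hwinPref _).symm
    · intro a ha
      have ha' := (Finset.mem_filter.1 ha).2
      refine Finset.mem_erase.2 ⟨?_, Finset.mem_filter.2 ⟨Finset.mem_univ _, ?_⟩⟩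
      · intro h
        have h' : (a : ℕ) = m * q ^ k := congrArg Fin.val h
        have := a.isLt; omega
      · exact (hwinPref a).trans ha'
    · intro b hb; exact Fin.ext rfl
    · intro a ha; exact Fin.ext rfl
  have hB : (S.erase ⟨0, by omega⟩).card = q * m := by
    rw [← hsuf w0]
    refine (Finset.card_bij'
      (i := fun (b : Fin (m * q ^ k + 1)) (hb : b ∈ S.erase ⟨0, by omega⟩) =>
        (⟨(b : ℕ) - 1, by have := b.isLt; omega⟩ : Fin (m * q ^ k)))
      (j := fun (a : Fin (m * q ^ k)) (_ : a ∈ _) =>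
        (⟨(a : ℕ) + 1, by have := a.isLt; omega⟩ : Fin (m * q ^ k + 1)))
      ?_ ?_ ?_ ?_)
    · intro b hb
      have hbne : b ≠ (⟨0, by omega⟩ : Fin (m * q ^ k + 1)) := Finset.ne_of_mem_erase hb
      have hbpos : 0 < (b : ℕ) := Nat.pos_of_ne_zero (fun h => hbne (Fin.ext h))
      have hb' := (Finset.mem_filter.1 (Finset.mem_of_mem_erase hb)).2
      simp only [Finset.mem_filter, Finset.mem_univ, true_and]
      have hbeq : (⟨((b : ℕ) - 1) + 1, by have := b.isLt; omega⟩ :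
          Fin (m * q ^ k + 1)) = b :=
        Fin.ext (by show (b : ℕ) - 1 + 1 = (b : ℕ); omega)
      have harg := congrArg (MDBaux.winAt s) hbeq
      exact ((hwinSuf ⟨(b : ℕ) - 1, by have := b.isLt; omega⟩).symm.trans
        (harg.trans hb'))
    · intro a ha
      have ha' := (Finset.mem_filter.1 ha).2
      refine Finset.mem_erase.2 ⟨?_, Finset.mem_filter.2 ⟨Finset.mem_univ _, ?_⟩⟩
      · intro h
        have h' : (a : ℕ) + 1 = 0 := congrArg Fin.val h
        omega
      · exact (hwinSuf a).trans ha'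
    · intro b hb
      have hbne : b ≠ (⟨0, by omega⟩ : Fin (m * q ^ k + 1)) := Finset.ne_of_mem_erase hb
      have hbpos : 0 < (b : ℕ) := Nat.pos_of_ne_zero (fun h => hbne (Fin.ext h))
      exact Fin.ext (by show (b : ℕ) - 1 + 1 = (b : ℕ); omega)
    · intro a ha
      exact Fin.ext (by show (a : ℕ) + 1 - 1 = (a : ℕ); omega)
  have hcard0 : (S.erase ⟨0, by omega⟩).card = S.card - 1 :=
    Finset.card_erase_of_mem h0S
  have hScard : 1 ≤ S.card := Finset.card_pos.2 ⟨_, h0S⟩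
  have hlast : (⟨m * q ^ k, by omega⟩ : Fin (m * q ^ k + 1)) ∈ S := by
    by_contra hcon
    rw [Finset.erase_eq_of_notMem hcon] at hA
    omega
  have hlast' : MDBaux.winAt s ⟨m * q ^ k, by omega⟩ = w0 :=
    (Finset.mem_filter.1 hlast).2
  have hcf := congrFun hlast' j
  rw [hw0] at hcf
  show s _ = s _
  refine Eq.trans ?_ (Eq.trans hcf.symm ?_)
  · show s _ = s _
    congr 1
    exact Fin.ext (by show (j:ℕ) = 0 + (j:ℕ); omega)
  · rfl
end

section
/- For q ≥ 2, the map that deletes the last k-1 characters is a bijection from the set of linear multi de Bruijn sequences (words of length mq^k+k-1 containing every k-mer exactly m times as a substring) to the set of linearizations of cyclic multi de Bruijn sequences (words of length mq^k containing every k-mer exactly m times cyclically). -/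
/-- Cyclic window of length k of a word of length n, starting at position i. -/
def cycWin (n k q : ℕ) (s : Fin n → Fin q) (i : Fin n) : Fin k → Fin q :=
  fun j => s ⟨((i : ℕ) + (j : ℕ)) % n, Nat.mod_lt _ i.pos⟩

/-- A linearized cyclic multi de Bruijn sequence: every k-mer occurs exactly m
times among the cyclic windows of length k. -/
def isCycMDB (m q k : ℕ) (s : Fin (m * q ^ k) → Fin q) : Prop :=
  ∀ y : Fin k → Fin q,
    (Finset.univ.filter (fun i : Fin (m * q ^ k) => cycWin (m * q ^ k) k q s i = y)).card = m

/-- A linear multi de Bruijn sequence: every k-mer occurs exactly m times among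
the contiguous substrings of length k. -/
def isLinMDB (m q k : ℕ) (s : Fin (m * q ^ k + k - 1) → Fin q) : Prop :=
  ∀ y : Fin k → Fin q,
    (Finset.univ.filter (fun i : Fin (m * q ^ k) => linWin m q k s i = y)).card = m

open Finset in
lemma sApp_congr {L q : ℕ} (s : Fin L → Fin q) {a b : ℕ} (ha : a < L) (hb : b < L)
    (h : a = b) : s ⟨a, ha⟩ = s ⟨b, hb⟩ := by subst h; rfl

lemma eq_snoc_iff {k q : ℕ} (w : Fin (k+1) → Fin q) (y : Fin k → Fin q) (a : Fin q) :
    w = Fin.snoc y a ↔ Fin.init w = y ∧ w (Fin.last k) = a := by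
  constructor
  · rintro rfl; exact ⟨by simp, by simp⟩
  · rintro ⟨rfl, rfl⟩; exact (Fin.snoc_init_self w).symm

lemma eq_cons_iff {k q : ℕ} (w : Fin (k+1) → Fin q) (y : Fin k → Fin q) (a : Fin q) :
    w = Fin.cons a y ↔ Fin.tail w = y ∧ w 0 = a := by
  constructor
  · rintro rfl; exact ⟨by simp, by simp⟩
  · rintro ⟨rfl, rfl⟩; exact (Fin.cons_self_tail w).symm

open Finset in
lemma prefix_count (m q k' : ℕ) (s : Fin (m * q ^ (k'+1) + (k'+1) - 1) → Fin q)
    (hs : isLinMDB m q (k'+1) s) (y : Fin k' → Fin q) :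
    (univ.filter (fun i : Fin (m * q ^ (k'+1)) =>
      Fin.init (linWin m q (k'+1) s i) = y)).card = q * m := by
  classical
  rw [Finset.card_eq_sum_card_fiberwise
    (f := fun i => linWin m q (k'+1) s i (Fin.last k')) (t := univ) (fun x _ => mem_univ _)]
  have : ∀ a : Fin q,
      ((univ.filter (fun i : Fin (m * q ^ (k'+1)) => Fin.init (linWin m q (k'+1) s i) = y)).filter
        (fun i => linWin m q (k'+1) s i (Fin.last k') = a)).card = m := by
    intro a
    rw [filter_filter]
    have h2 : (univ.filter (fun i : Fin (m * q ^ (k'+1)) =>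
        Fin.init (linWin m q (k'+1) s i) = y ∧ linWin m q (k'+1) s i (Fin.last k') = a))
        = univ.filter (fun i => linWin m q (k'+1) s i = Fin.snoc y a) := by
      apply Finset.filter_congr
      intro i _
      simp only [eq_snoc_iff]
    rw [h2]
    exact hs _
  simp only [this, Finset.sum_const, card_univ, Fintype.card_fin, smul_eq_mul, mul_one]

open Finset in
lemma suffix_count (m q k' : ℕ) (s : Fin (m * q ^ (k'+1) + (k'+1) - 1) → Fin q)
    (hs : isLinMDB m q (k'+1) s) (y : Fin k' → Fin q) :
    (univ.filter (fun i : Fin (m * q ^ (k'+1)) =>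
      Fin.tail (linWin m q (k'+1) s i) = y)).card = q * m := by
  classical
  rw [Finset.card_eq_sum_card_fiberwise
    (f := fun i => linWin m q (k'+1) s i 0) (t := univ) (fun x _ => mem_univ _)]
  have : ∀ a : Fin q,
      ((univ.filter (fun i : Fin (m * q ^ (k'+1)) => Fin.tail (linWin m q (k'+1) s i) = y)).filter
        (fun i => linWin m q (k'+1) s i 0 = a)).card = m := by
    intro a
    rw [filter_filter]
    have h2 : (univ.filter (fun i : Fin (m * q ^ (k'+1)) =>
        Fin.tail (linWin m q (k'+1) s i) = y ∧ linWin m q (k'+1) s i 0 = a))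
        = univ.filter (fun i => linWin m q (k'+1) s i = Fin.cons a y) := by
      apply Finset.filter_congr
      intro i _
      simp only [eq_cons_iff]
    rw [h2]
    exact hs _
  simp only [this, Finset.sum_const, card_univ, Fintype.card_fin, smul_eq_mul, mul_one]


/-- Window of length k' starting at i, for i up to N (inclusive). -/
def Wfun (m q k' : ℕ) (s : Fin (m * q ^ (k'+1) + (k'+1) - 1) → Fin q)
    (i : Fin (m * q ^ (k'+1) + 1)) (j : Fin k') : Fin q :=
  s ⟨(i : ℕ) + (j : ℕ), by have := i.isLt; have := j.isLt; omega⟩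

lemma Wfun_castSucc (m q k' : ℕ) (s : Fin (m * q ^ (k'+1) + (k'+1) - 1) → Fin q)
    (a : Fin (m * q ^ (k'+1))) :
    Wfun m q k' s a.castSucc = Fin.init (linWin m q (k'+1) s a) := by
  funext jj
  exact sApp_congr s (by have := a.isLt; have := jj.isLt; omega)
    (by have := a.isLt; have := jj.isLt; omega) (by simp)

lemma Wfun_succ (m q k' : ℕ) (s : Fin (m * q ^ (k'+1) + (k'+1) - 1) → Fin q)
    (a : Fin (m * q ^ (k'+1))) :
    Wfun m q k' s a.succ = Fin.tail (linWin m q (k'+1) s a) := by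
  funext jj
  exact sApp_congr s (by have := a.isLt; have := jj.isLt; omega)
    (by have := a.isLt; have := jj.isLt; omega) (by simp [Fin.val_succ]; omega)

open Finset in
lemma wrap_count_pre (m q k' : ℕ) (s : Fin (m * q ^ (k'+1) + (k'+1) - 1) → Fin q)
    (hs : isLinMDB m q (k'+1) s) (y : Fin k' → Fin q) :
    (univ.filter (fun i : Fin (m * q ^ (k'+1) + 1) =>
      Wfun m q k' s i = y ∧ (i : ℕ) ≠ m * q ^ (k'+1))).card = q * m := by
  classical
  have himg : (univ.filter (fun i : Fin (m * q ^ (k'+1) + 1) =>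
        Wfun m q k' s i = y ∧ (i : ℕ) ≠ m * q ^ (k'+1)))
      = (univ.filter (fun a : Fin (m * q ^ (k'+1)) =>
          Fin.init (linWin m q (k'+1) s a) = y)).image Fin.castSucc := by
    ext i
    simp only [Finset.mem_image, Finset.mem_filter, Finset.mem_univ, true_and]
    constructor
    · rintro ⟨h1, h2⟩
      have hlt : (i : ℕ) < m * q ^ (k'+1) := by have := i.isLt; omega
      refine ⟨⟨(i : ℕ), hlt⟩, ?_, Fin.ext rfl⟩
      rw [← Wfun_castSucc]
      have he : (⟨(i : ℕ), hlt⟩ : Fin (m * q ^ (k'+1))).castSucc = i := Fin.ext rfl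
      rw [he]; exact h1
    · rintro ⟨a, ha, rfl⟩
      refine ⟨by rw [Wfun_castSucc]; exact ha, ?_⟩
      simp only [Fin.coe_castSucc]
      have := a.isLt; omega
  rw [himg, Finset.card_image_of_injective _ (Fin.castSucc_injective _),
    prefix_count m q k' s hs y]

open Finset in
lemma wrap_count_suf (m q k' : ℕ) (s : Fin (m * q ^ (k'+1) + (k'+1) - 1) → Fin q)
    (hs : isLinMDB m q (k'+1) s) (y : Fin k' → Fin q) :
    (univ.filter (fun i : Fin (m * q ^ (k'+1) + 1) =>
      Wfun m q k' s i = y ∧ (i : ℕ) ≠ 0)).card = q * m := by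
  classical
  have himg : (univ.filter (fun i : Fin (m * q ^ (k'+1) + 1) =>
        Wfun m q k' s i = y ∧ (i : ℕ) ≠ 0))
      = (univ.filter (fun a : Fin (m * q ^ (k'+1)) =>
          Fin.tail (linWin m q (k'+1) s a) = y)).image Fin.succ := by
    ext i
    simp only [Finset.mem_image, Finset.mem_filter, Finset.mem_univ, true_and]
    constructor
    · rintro ⟨h1, h2⟩
      have hlt : (i : ℕ) - 1 < m * q ^ (k'+1) := by have := i.isLt; omega
      refine ⟨⟨(i : ℕ) - 1, hlt⟩, ?_, Fin.ext (by simp only [Fin.val_succ]; omega)⟩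
      rw [← Wfun_succ]
      have he : (⟨(i : ℕ) - 1, hlt⟩ : Fin (m * q ^ (k'+1))).succ = i :=
        Fin.ext (by simp only [Fin.val_succ]; omega)
      rw [he]; exact h1
    · rintro ⟨a, ha, rfl⟩
      refine ⟨by rw [Wfun_succ]; exact ha, by simp [Fin.val_succ]⟩
  rw [himg, Finset.card_image_of_injective _ (Fin.succ_injective _),
    suffix_count m q k' s hs y]

set_option maxHeartbeats 1000000 in
open Finset in
lemma wrap_eq (m q k' : ℕ) (hm : 1 ≤ m) (hq : 1 ≤ q)
    (s : Fin (m * q ^ (k'+1) + (k'+1) - 1) → Fin q) (hs : isLinMDB m q (k'+1) s)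
    (j : ℕ) (hj : j < k') :
    s ⟨m * q ^ (k'+1) + j, by omega⟩ = s ⟨j, by omega⟩ := by
  classical
  have hN0 : 0 < m * q ^ (k'+1) := Nat.mul_pos hm (Nat.pow_pos hq)
  -- split lemma
  have hsplit : ∀ (y : Fin k' → Fin q) (c : ℕ) (hc : c < m * q ^ (k'+1) + 1),
      (univ.filter (fun i : Fin (m * q ^ (k'+1) + 1) => Wfun m q k' s i = y)).card
      = (univ.filter (fun i : Fin (m * q ^ (k'+1) + 1) =>
          Wfun m q k' s i = y ∧ (i : ℕ) ≠ c)).card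
        + (if Wfun m q k' s ⟨c, hc⟩ = y then 1 else 0) := by
    intro y c hc
    have h := Finset.card_filter_add_card_filter_not
      (s := univ.filter (fun i : Fin (m * q ^ (k'+1) + 1) => Wfun m q k' s i = y))
      (p := fun i => (i : ℕ) ≠ c)
    rw [filter_filter, filter_filter] at h
    have h1 : (univ.filter (fun i : Fin (m * q ^ (k'+1) + 1) =>
        Wfun m q k' s i = y ∧ ¬ (i : ℕ) ≠ c))
        = (univ.filter (fun i : Fin (m * q ^ (k'+1) + 1) =>
            Wfun m q k' s ⟨c, hc⟩ = y ∧ i = ⟨c, hc⟩)) := by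
      apply Finset.filter_congr
      intro i _
      constructor
      · rintro ⟨h1, h2⟩
        have hi : i = ⟨c, hc⟩ := Fin.ext (not_not.mp h2)
        exact ⟨hi ▸ h1, hi⟩
      · rintro ⟨h1, rfl⟩
        exact ⟨h1, by simp⟩
    rw [h1] at h
    by_cases hcy : Wfun m q k' s ⟨c, hc⟩ = y
    · rw [if_pos hcy]
      have h2 : (univ.filter (fun i : Fin (m * q ^ (k'+1) + 1) =>
          Wfun m q k' s ⟨c, hc⟩ = y ∧ i = ⟨c, hc⟩)) = {⟨c, hc⟩} := by
        ext i; simp [hcy]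
      rw [h2, Finset.card_singleton] at h
      omega
    · rw [if_neg hcy]
      have h2 : (univ.filter (fun i : Fin (m * q ^ (k'+1) + 1) =>
          Wfun m q k' s ⟨c, hc⟩ = y ∧ i = ⟨c, hc⟩)) = ∅ := by
        ext i; simp [hcy]
      rw [h2, Finset.card_empty] at h
      omega
  have e1 := hsplit (Wfun m q k' s ⟨0, by omega⟩) (m * q ^ (k'+1)) (by omega)
  have e2 := hsplit (Wfun m q k' s ⟨0, by omega⟩) 0 (by omega)
  rw [wrap_count_pre m q k' s hs] at e1
  rw [wrap_count_suf m q k' s hs] at e2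
  rw [if_pos rfl] at e2
  have hkey : Wfun m q k' s ⟨m * q ^ (k'+1), by omega⟩ = Wfun m q k' s ⟨0, by omega⟩ := by
    by_contra hcon
    rw [if_neg hcon] at e1
    omega
  have := congrFun hkey ⟨j, hj⟩
  have l1 : Wfun m q k' s ⟨m * q ^ (k'+1), by omega⟩ ⟨j, hj⟩
      = s ⟨m * q ^ (k'+1) + j, by omega⟩ := sApp_congr s (by omega) (by omega) rfl
  have l2 : Wfun m q k' s ⟨0, by omega⟩ ⟨j, hj⟩ = s ⟨j, by omega⟩ :=
    sApp_congr s (by omega) (by omega) (by simp)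
  exact (l1.symm.trans this).trans l2

/-- For q ≥ 2, deleting the last k-1 characters is a bijection from
linear multi de Bruijn sequences to linearized cyclic multi de Bruijn sequences. -/
theorem linear_mdb_equiv_linearized_cyclic (m q k : ℕ) (hm : 1 ≤ m) (hq : 2 ≤ q) (hk : 1 ≤ k) :
    Set.BijOn
      (fun (s : Fin (m * q ^ k + k - 1) → Fin q) (i : Fin (m * q ^ k)) =>
        s ⟨(i : ℕ), by have hi := i.isLt; omega⟩)
      {s | isLinMDB m q k s} {w | isCycMDB m q k w} := by
  obtain ⟨k', rfl⟩ : ∃ k', k = k' + 1 := ⟨k - 1, by omega⟩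
  have hq1 : 1 ≤ q := by omega
  have hN0 : 0 < m * q ^ (k'+1) := Nat.mul_pos hm (Nat.pow_pos hq1)
  have hk'N : k' < m * q ^ (k'+1) := by
    have h0 : k' < 2 ^ k' := Nat.lt_two_pow_self
    have h1 : (2:ℕ) ^ k' ≤ 2 ^ (k'+1) := Nat.pow_le_pow_right (by omega) (by omega)
    have h2 : (2:ℕ) ^ (k'+1) ≤ q ^ (k'+1) := Nat.pow_le_pow_left hq _
    have h3 : q ^ (k'+1) ≤ m * q ^ (k'+1) := Nat.le_mul_of_pos_left _ hm
    omega
  classical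
  refine ⟨?_, ?_, ?_⟩
  · -- MapsTo
    intro s hs
    simp only [Set.mem_setOf_eq] at hs ⊢
    intro y
    have hwin : ∀ i : Fin (m * q ^ (k'+1)),
        cycWin (m * q ^ (k'+1)) (k'+1) q
          (fun i2 : Fin (m * q ^ (k'+1)) => s ⟨(i2 : ℕ), by have := i2.isLt; omega⟩) i
        = linWin m q (k'+1) s i := by
      intro i
      funext jj
      simp only [cycWin, linWin]
      have hi := i.isLt
      have hjj := jj.isLt
      have hmlt : ((i : ℕ) + (jj : ℕ)) % (m * q ^ (k'+1)) < m * q ^ (k'+1) :=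
        Nat.mod_lt _ hN0
      by_cases hlt : (i : ℕ) + (jj : ℕ) < m * q ^ (k'+1)
      · exact sApp_congr s (by omega) (by omega) (by rw [Nat.mod_eq_of_lt hlt])
      · have hmod : ((i : ℕ) + (jj : ℕ)) % (m * q ^ (k'+1))
            = (i : ℕ) + (jj : ℕ) - m * q ^ (k'+1) := by
          rw [Nat.mod_eq_sub_mod (by omega), Nat.mod_eq_of_lt (by omega)]
        have hjlt : (i : ℕ) + (jj : ℕ) - m * q ^ (k'+1) < k' := by omega
        have w1 := wrap_eq m q k' hm hq1 s hs ((i : ℕ) + (jj : ℕ) - m * q ^ (k'+1)) hjlt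
        exact (sApp_congr s (by omega) (by omega) hmod).trans
          (w1.symm.trans (sApp_congr s (by omega) (by omega) (by omega)))
    have hfe : (Finset.univ.filter (fun i : Fin (m * q ^ (k'+1)) =>
        cycWin (m * q ^ (k'+1)) (k'+1) q
          (fun i2 : Fin (m * q ^ (k'+1)) => s ⟨(i2 : ℕ), by have := i2.isLt; omega⟩) i = y))
        = (Finset.univ.filter (fun i : Fin (m * q ^ (k'+1)) =>
            linWin m q (k'+1) s i = y)) :=
      Finset.filter_congr (fun i _ => by rw [hwin i])
    rw [hfe]
    exact hs y
  · -- InjOn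
    intro s1 h1 s2 h2 heq
    simp only [Set.mem_setOf_eq] at h1 h2
    have heq2 : ∀ i : Fin (m * q ^ (k'+1)),
        s1 ⟨(i : ℕ), by have := i.isLt; omega⟩ = s2 ⟨(i : ℕ), by have := i.isLt; omega⟩ :=
      fun i => congrFun heq i
    funext v
    by_cases hv : (v : ℕ) < m * q ^ (k'+1)
    · exact heq2 ⟨(v : ℕ), hv⟩
    · have hvlt := v.isLt
      have hj : (v : ℕ) - m * q ^ (k'+1) < k' := by omega
      have w1 := wrap_eq m q k' hm hq1 s1 h1 ((v : ℕ) - m * q ^ (k'+1)) hj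
      have w2 := wrap_eq m q k' hm hq1 s2 h2 ((v : ℕ) - m * q ^ (k'+1)) hj
      have hmid := heq2 ⟨(v : ℕ) - m * q ^ (k'+1), by omega⟩
      have a1 : s1 v = s1 ⟨m * q ^ (k'+1) + ((v : ℕ) - m * q ^ (k'+1)), by omega⟩ :=
        sApp_congr s1 v.isLt (by omega) (by omega)
      have a2 : s2 ⟨m * q ^ (k'+1) + ((v : ℕ) - m * q ^ (k'+1)), by omega⟩ = s2 v :=
        sApp_congr s2 (by omega) v.isLt (by omega)
      exact a1.trans (w1.trans (hmid.trans (w2.symm.trans a2)))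
  · -- SurjOn
    intro w hw
    simp only [Set.mem_setOf_eq] at hw
    refine ⟨fun x => w ⟨(x : ℕ) % (m * q ^ (k'+1)), Nat.mod_lt _ hN0⟩, ?_, ?_⟩
    · simp only [Set.mem_setOf_eq]
      intro y
      have hwin : ∀ i : Fin (m * q ^ (k'+1)),
          linWin m q (k'+1) (fun x => w ⟨(x : ℕ) % (m * q ^ (k'+1)), Nat.mod_lt _ hN0⟩) i
          = cycWin (m * q ^ (k'+1)) (k'+1) q w i := by
        intro i; funext jj; rfl
      have hfe : (Finset.univ.filter (fun i : Fin (m * q ^ (k'+1)) =>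
          linWin m q (k'+1) (fun x => w ⟨(x : ℕ) % (m * q ^ (k'+1)), Nat.mod_lt _ hN0⟩) i = y))
          = (Finset.univ.filter (fun i : Fin (m * q ^ (k'+1)) =>
              cycWin (m * q ^ (k'+1)) (k'+1) q w i = y)) :=
        Finset.filter_congr (fun i _ => by rw [hwin i])
      rw [hfe]
      exact hw y
    · funext i
      exact congrArg w (Fin.ext (Nat.mod_eq_of_lt i.isLt))
end

section
/- A cyclic multi de Bruijn sequence with parameters (m,q,k) has rotational order d (the largest d with ρ^{ℓ/d}(s)=s, where ℓ = mq^k) only if d divides m. -/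
/-- Cyclic shift of a word of length n by r positions. -/
def cshift (n r q : ℕ) (s : Fin n → Fin q) : Fin n → Fin q :=
  fun i => s ⟨((i : ℕ) + r) % n, Nat.mod_lt _ i.pos⟩

/-- `s` (of length n) has rotational order e: e is the largest divisor d of n
such that shifting s by n/d positions leaves s fixed. -/
def hasOrder (n q : ℕ) (s : Fin n → Fin q) (e : ℕ) : Prop :=
  IsGreatest {d : ℕ | d ∣ n ∧ cshift n (n / d) q s = s} e

/-- If shifting by `r` fixes `s` and `n = d * r`, then the number of cyclic
windows equal to any fixed word `y0` is a multiple of `d`. -/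
lemma aux_count (n q k r d : ℕ) (hnpos : 0 < n) (hrpos : 0 < r) (hrd : d * r = n)
    (s : Fin n → Fin q) (hfix : cshift n r q s = s) (y0 : Fin k → Fin q) :
    d ∣ (Finset.univ.filter (fun i : Fin n => cycWin n k q s i = y0)).card := by
  have hrlt : r ≤ n := Nat.le_of_dvd hnpos (Dvd.intro_left d hrd)
  have hstep : ∀ x : Fin n, s ⟨((x : ℕ) + r) % n, Nat.mod_lt _ hnpos⟩ = s x := by
    intro x
    have := congrFun hfix x
    simpa [cshift] using this
  have hiter : ∀ (t : ℕ) (x : Fin n),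
      s ⟨((x : ℕ) + t * r) % n, Nat.mod_lt _ hnpos⟩ = s x := by
    intro t
    induction t with
    | zero =>
      intro x
      have : ((x : ℕ) + 0 * r) % n = (x : ℕ) := by
        simp [Nat.mod_eq_of_lt x.isLt]
      simp only [this]
    | succ t ih =>
      intro x
      have h1 := hstep ⟨((x : ℕ) + t * r) % n, Nat.mod_lt _ hnpos⟩
      rw [ih] at h1
      rw [← h1]
      congr 1
      apply Fin.ext
      show ((x : ℕ) + (t + 1) * r) % n = (((x : ℕ) + t * r) % n + r) % n
      rw [Nat.mod_add_mod]
      ring_nf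
  -- window depends only on position mod r
  have hwin : ∀ i : Fin n, cycWin n k q s i =
      cycWin n k q s ⟨(i : ℕ) % r, lt_of_lt_of_le (Nat.mod_lt _ hrpos) hrlt⟩ := by
    intro i
    funext j
    show s _ = s _
    have h1 := hiter ((i : ℕ) / r) ⟨((i : ℕ) % r + (j : ℕ)) % n, Nat.mod_lt _ hnpos⟩
    rw [← h1]
    congr 1
    apply Fin.ext
    show ((i : ℕ) + (j : ℕ)) % n = (((i : ℕ) % r + (j : ℕ)) % n + (i : ℕ) / r * r) % n
    rw [Nat.mod_add_mod]
    have hmd := Nat.mod_add_div' (i : ℕ) r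
    congr 1
    omega
  have hdpos : 0 < d := by
    rcases Nat.eq_zero_or_pos d with h | h
    · subst h; simp at hrd; omega
    · exact h
  set S := Finset.univ.filter (fun i : Fin n => cycWin n k q s i = y0) with hSdef
  set T := Finset.univ.filter
    (fun c : Fin r => cycWin n k q s ⟨(c : ℕ), lt_of_lt_of_le c.isLt hrlt⟩ = y0) with hTdef
  have hST : S.card = (T ×ˢ (Finset.univ : Finset (Fin d))).card := by
    apply Finset.card_bij (fun (i : Fin n) (_ : i ∈ S) =>
      ((⟨(i : ℕ) % r, Nat.mod_lt _ hrpos⟩ : Fin r),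
       (⟨(i : ℕ) / r, by
          rw [Nat.div_lt_iff_lt_mul hrpos]
          have := i.isLt
          omega⟩ : Fin d)))
    · intro i hi
      rw [Finset.mem_product]
      refine ⟨?_, Finset.mem_univ _⟩
      rw [hTdef, Finset.mem_filter]
      refine ⟨Finset.mem_univ _, ?_⟩
      rw [hSdef, Finset.mem_filter] at hi
      rw [← hi.2, hwin i]
    · intro a ha b hb hab
      simp only [Prod.mk.injEq, Fin.mk.injEq] at hab
      apply Fin.ext
      have h1 := Nat.mod_add_div (a : ℕ) r
      have h2 := Nat.mod_add_div (b : ℕ) r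
      obtain ⟨e1, e2⟩ := hab
      rw [e1, e2] at h1
      omega
    · rintro ⟨c, t⟩ hct
      rw [Finset.mem_product] at hct
      have hlt : (c : ℕ) + (t : ℕ) * r < n := by
        have hc := c.isLt
        have ht := t.isLt
        calc (c : ℕ) + (t : ℕ) * r < r + (t : ℕ) * r := by omega
        _ = ((t : ℕ) + 1) * r := by ring
        _ ≤ d * r := Nat.mul_le_mul_right r (by omega)
        _ = n := hrd
      have hcmod : ((c : ℕ) + (t : ℕ) * r) % r = (c : ℕ) := by
        rw [Nat.add_mul_mod_self_right, Nat.mod_eq_of_lt c.isLt]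
      have hcdiv : ((c : ℕ) + (t : ℕ) * r) / r = (t : ℕ) := by
        rw [Nat.add_mul_div_right _ _ hrpos, Nat.div_eq_of_lt c.isLt, Nat.zero_add]
      refine ⟨⟨(c : ℕ) + (t : ℕ) * r, hlt⟩, ?_, ?_⟩
      · rw [hSdef, Finset.mem_filter]
        refine ⟨Finset.mem_univ _, ?_⟩
        rw [hwin]
        rw [hTdef, Finset.mem_filter] at hct
        have := hct.1.2
        convert this using 2
        exact Fin.ext hcmod
      · simp only [Prod.mk.injEq]
        refine ⟨?_, ?_⟩ <;> apply Fin.ext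
        · exact hcmod
        · exact hcdiv
  rw [Finset.card_product, Finset.card_univ, Fintype.card_fin] at hST
  exact ⟨T.card, by rw [hST, Nat.mul_comm]⟩

/-- A cyclic multi de Bruijn sequence with parameters (m,q,k) has
rotational order d only if d divides m. -/
theorem mdb_order_dvd_multiplicity (m q k d : ℕ) (hm : 1 ≤ m) (hq : 1 ≤ q) (hk : 1 ≤ k)
    (s : Fin (m * q ^ k) → Fin q) (hs : isCycMDB m q k s)
    (hd : hasOrder (m * q ^ k) q s d) :
    d ∣ m := by
  have hnpos : 0 < m * q ^ k := by positivity
  obtain ⟨⟨hdvd, hfix⟩, -⟩ := hd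
  have hdpos : 0 < d := Nat.pos_of_dvd_of_pos hdvd hnpos
  have hrpos : 0 < m * q ^ k / d := Nat.div_pos (Nat.le_of_dvd hnpos hdvd) hdpos
  have hrd : d * (m * q ^ k / d) = m * q ^ k := Nat.mul_div_cancel' hdvd
  have := aux_count (m * q ^ k) q k (m * q ^ k / d) d hnpos hrpos hrd s hfix
    (fun _ => ⟨0, hq⟩)
  rwa [hs (fun _ => ⟨0, hq⟩)] at this
end

section
/- For m,q,k ≥ 1 and d | m, the map t ↦ t^d (concatenating d copies) is a bijection from linearized cyclic multi de Bruijn sequences with parameters (m/d, q, k) of rotational order 1 to linearized cyclic multi de Bruijn sequences with parameters (m, q, k) of rotational order d. -/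
namespace PMB

variable {n q M : ℕ}

def idx (hn : 0 < n) (s : Fin n → Fin q) (a : ℕ) : Fin q :=
  s ⟨a % n, Nat.mod_lt _ hn⟩

lemma idx_congr (hn : 0 < n) (s : Fin n → Fin q) {a b : ℕ} (h : a % n = b % n) :
    idx hn s a = idx hn s b := by
  unfold idx; congr 1; exact Fin.ext h

lemma idx_fin (hn : 0 < n) (s : Fin n → Fin q) (i : Fin n) : idx hn s i = s i := by
  unfold idx; congr 1; exact Fin.ext (Nat.mod_eq_of_lt i.isLt)

def Per (hn : 0 < n) (s : Fin n → Fin q) (r : ℕ) : Prop :=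
  ∀ a : ℕ, idx hn s (a + r) = idx hn s a

lemma cshift_eq_iff (hn : 0 < n) (s : Fin n → Fin q) (r : ℕ) :
    cshift n r q s = s ↔ Per hn s r := by
  constructor
  · intro h a
    have h2 := congrFun h ⟨a % n, Nat.mod_lt _ hn⟩
    have h3 : idx hn s (a % n + r) = idx hn s a := h2
    exact (idx_congr hn s (Nat.mod_add_mod a n r).symm).trans h3
  · intro h
    funext i
    have h1 : cshift n r q s i = idx hn s ((i : ℕ) + r) := rfl
    rw [h1, h ((i : ℕ)), idx_fin]

lemma per_n (hn : 0 < n) (s : Fin n → Fin q) : Per hn s n :=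
  fun a => idx_congr hn s (by rw [Nat.add_mod_right])

lemma per_add (hn : 0 < n) {s : Fin n → Fin q} {r1 r2 : ℕ}
    (h1 : Per hn s r1) (h2 : Per hn s r2) : Per hn s (r1 + r2) := by
  intro a
  rw [← Nat.add_assoc]
  exact (h2 (a + r1)).trans (h1 a)

lemma per_sub (hn : 0 < n) {s : Fin n → Fin q} {r1 r2 : ℕ}
    (h1 : Per hn s r1) (h2 : Per hn s r2) (h : r2 ≤ r1) : Per hn s (r1 - r2) := by
  intro a
  have h3 := h2 (a + (r1 - r2))
  have e : a + (r1 - r2) + r2 = a + r1 := by omega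
  rw [e] at h3
  exact h3.symm.trans (h1 a)

lemma per_mul (hn : 0 < n) {s : Fin n → Fin q} {r : ℕ}
    (h : Per hn s r) (c : ℕ) : Per hn s (c * r) := by
  induction c with
  | zero => intro a; rw [Nat.zero_mul, Nat.add_zero]
  | succ c ih =>
      have : (c + 1) * r = c * r + r := by ring
      rw [this]
      exact per_add hn ih h

lemma per_mod (hn : 0 < n) {s : Fin n → Fin q} {r1 r2 : ℕ}
    (h1 : Per hn s r1) (h2 : Per hn s r2) (hr1 : 0 < r1) : Per hn s (r2 % r1) := by
  have key := Nat.mod_add_div r2 r1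
  have hle : r1 * (r2 / r1) ≤ r2 := by omega
  have e : r2 % r1 = r2 - r1 * (r2 / r1) := by omega
  rw [e]
  have hmul : Per hn s (r1 * (r2 / r1)) := by
    rw [Nat.mul_comm]; exact per_mul hn h1 _
  exact per_sub hn h2 hmul hle

lemma per_gcd (hn : 0 < n) {s : Fin n → Fin q} :
    ∀ r1 r2 : ℕ, Per hn s r1 → Per hn s r2 → Per hn s (Nat.gcd r1 r2) := by
  intro r1 r2
  induction r1, r2 using Nat.gcd.induction with
  | H0 r2 => intro _ h2; simpa using h2
  | H1 r1 r2 hr1 ih =>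
      intro h1 h2
      rw [Nat.gcd_rec]
      exact ih (per_mod hn h1 h2 hr1) h1

lemma per_order_one (hn : 0 < n) {t : Fin n → Fin q} (h : hasOrder n q t 1)
    {r : ℕ} (hr : Per hn t r) : n ∣ r := by
  have hgcd : Per hn t (Nat.gcd r n) := per_gcd hn r n hr (per_n hn t)
  have hdvd : Nat.gcd r n ∣ n := Nat.gcd_dvd_right r n
  have hg0 : 0 < Nat.gcd r n := Nat.gcd_pos_of_pos_right r hn
  have hmem : n / Nat.gcd r n ∈ {d : ℕ | d ∣ n ∧ cshift n (n / d) q t = t} := by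
    refine ⟨Nat.div_dvd_of_dvd hdvd, ?_⟩
    rw [Nat.div_div_self hdvd hn.ne', cshift_eq_iff hn]
    exact hgcd
  have hle := h.2 hmem
  have h1 : 1 ≤ n / Nat.gcd r n := (Nat.one_le_div_iff hg0).2 (Nat.le_of_dvd hn hdvd)
  have heq : n / Nat.gcd r n = 1 := le_antisymm hle h1
  have : Nat.gcd r n = n := by
    have := Nat.div_mul_cancel hdvd
    rw [heq, Nat.one_mul] at this
    exact this
  exact this ▸ Nat.gcd_dvd_left r n

lemma idx_lift (hM0 : 0 < M) (hn : 0 < n) (hnM : n ∣ M)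
    (t : Fin n → Fin q) (s : Fin M → Fin q)
    (hs : ∀ i : Fin M, s i = t ⟨(i : ℕ) % n, Nat.mod_lt _ hn⟩) (b : ℕ) :
    idx hM0 s b = idx hn t b := by
  show s ⟨b % M, _⟩ = t ⟨b % n, _⟩
  rw [hs]
  congr 1
  exact Fin.ext (Nat.mod_mod_of_dvd _ hnM)

lemma per_lift_iff (hM0 : 0 < M) (hn : 0 < n) (hnM : n ∣ M)
    (t : Fin n → Fin q) (s : Fin M → Fin q)
    (hs : ∀ i : Fin M, s i = t ⟨(i : ℕ) % n, Nat.mod_lt _ hn⟩) (r : ℕ) :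
    Per hM0 s r ↔ Per hn t r := by
  unfold Per
  refine forall_congr' fun a => ?_
  rw [idx_lift hM0 hn hnM t s hs, idx_lift hM0 hn hnM t s hs]

lemma win_eq (hn : 0 < n) (hnM : n ∣ M) (t : Fin n → Fin q) (s : Fin M → Fin q)
    (hs : ∀ i : Fin M, s i = t ⟨(i : ℕ) % n, Nat.mod_lt _ hn⟩) (k : ℕ) (i : Fin M) :
    cycWin M k q s i = cycWin n k q t ⟨(i : ℕ) % n, Nat.mod_lt _ hn⟩ := by
  funext j
  show s ⟨((i : ℕ) + (j : ℕ)) % M, _⟩ = t ⟨((i : ℕ) % n + (j : ℕ)) % n, _⟩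
  rw [hs]
  congr 1
  apply Fin.ext
  show ((i : ℕ) + (j : ℕ)) % M % n = ((i : ℕ) % n + (j : ℕ)) % n
  rw [Nat.mod_mod_of_dvd _ hnM, Nat.mod_add_mod]

lemma fiber_card {d : ℕ} (hn : 0 < n) (hM : M = d * n) (j : Fin n) :
    (Finset.univ.filter (fun i : Fin M => (i : ℕ) % n = (j : ℕ))).card = d := by
  classical
  rw [← Fintype.card_subtype]
  have e : {i : Fin M // (i : ℕ) % n = (j : ℕ)} ≃ Fin d :=
    { toFun := fun x => ⟨(x.1 : ℕ) / n, by
        have h1 : (x.1 : ℕ) < d * n := hM ▸ x.1.isLt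
        exact (Nat.div_lt_iff_lt_mul hn).2 h1⟩
      invFun := fun c => ⟨⟨n * (c : ℕ) + (j : ℕ), by
        have h1 : (c : ℕ) + 1 ≤ d := c.isLt
        have h2 : (j : ℕ) < n := j.isLt
        calc n * (c : ℕ) + (j : ℕ) < n * ((c : ℕ) + 1) := by ring_nf; omega
          _ ≤ n * d := Nat.mul_le_mul_left n h1
          _ = d * n := Nat.mul_comm _ _
          _ = M := hM.symm⟩, by
        show (n * (c : ℕ) + (j : ℕ)) % n = (j : ℕ)
        rw [Nat.mul_add_mod, Nat.mod_eq_of_lt j.isLt]⟩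
      left_inv := fun x => by
        apply Subtype.ext; apply Fin.ext
        show n * ((x.1 : ℕ) / n) + (j : ℕ) = (x.1 : ℕ)
        have h2 : n * ((x.1 : ℕ) / n) + (x.1 : ℕ) % n = (x.1 : ℕ) := Nat.div_add_mod _ n
        rw [x.2] at h2
        exact h2
      right_inv := fun c => by
        apply Fin.ext
        show (n * (c : ℕ) + (j : ℕ)) / n = (c : ℕ)
        rw [Nat.mul_add_div hn, Nat.div_eq_of_lt j.isLt, Nat.add_zero] }
  rw [Fintype.card_congr e, Fintype.card_fin]

lemma count_eq {d k : ℕ} (hn : 0 < n) (hM : M = d * n)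
    (t : Fin n → Fin q) (s : Fin M → Fin q)
    (hs : ∀ i : Fin M, s i = t ⟨(i : ℕ) % n, Nat.mod_lt _ hn⟩) (y : Fin k → Fin q) :
    (Finset.univ.filter (fun i : Fin M => cycWin M k q s i = y)).card
      = (Finset.univ.filter (fun j : Fin n => cycWin n k q t j = y)).card * d := by
  classical
  have hnM : n ∣ M := hM ▸ dvd_mul_left n d
  set f : Fin M → Fin n := fun i => ⟨(i : ℕ) % n, Nat.mod_lt _ hn⟩ with hf
  have hP : ∀ i : Fin M, (cycWin M k q s i = y) ↔ (cycWin n k q t (f i) = y) := by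
    intro i; rw [win_eq hn hnM t s hs k i]
  rw [Finset.card_eq_sum_card_fiberwise
    (t := Finset.univ.filter (fun j : Fin n => cycWin n k q t j = y)) (f := f)
    (fun x hx => by
      simp only [Finset.mem_coe, Finset.mem_filter, Finset.mem_univ, true_and] at hx ⊢
      exact (hP x).1 hx)]
  have hconst : ∀ b ∈ Finset.univ.filter (fun j : Fin n => cycWin n k q t j = y),
      ((Finset.univ.filter (fun i : Fin M => cycWin M k q s i = y)).filter
        (fun i => f i = b)).card = d := by
    intro b hb
    have hbQ : cycWin n k q t b = y := by
      simpa using hb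
    rw [Finset.filter_filter]
    have hiff : ∀ i : Fin M, ((cycWin M k q s i = y) ∧ f i = b) ↔ ((i : ℕ) % n = (b : ℕ)) := by
      intro i
      constructor
      · rintro ⟨_, hfb⟩; exact congrArg Fin.val hfb
      · intro h
        have hfb : f i = b := Fin.ext h
        exact ⟨(hP i).2 (hfb ▸ hbQ), hfb⟩
    rw [Finset.filter_congr (fun i _ => hiff i)]
    exact fiber_card hn hM b
  rw [Finset.sum_congr rfl hconst, Finset.sum_const, smul_eq_mul]

lemma reduce (hM0 : 0 < M) (hnM : n ∣ M) (hn : 0 < n) (s : Fin M → Fin q)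
    (hper : Per hM0 s n) : ∀ a : ℕ, idx hM0 s a = idx hM0 s (a % n) := by
  intro a
  induction a using Nat.strong_induction_on with
  | _ a ih =>
    rcases lt_or_ge a n with h | h
    · rw [Nat.mod_eq_of_lt h]
    · have h1 := hper (a - n)
      have e : a - n + n = a := by omega
      rw [e] at h1
      have h2 := ih (a - n) (by omega)
      have e2 : (a - n) % n = a % n := by
        conv_rhs => rw [← e]
        rw [Nat.add_mod_right]
      rw [h1, h2, e2]

end PMB

open PMB

/-- For m,q,k ≥ 1 and d | m, the map t ↦ t^d (concatenating d copies)
is a bijection from linearized cyclic multi de Bruijn sequences with parameters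
(m/d, q, k) of rotational order 1 to those with parameters (m, q, k) of order d. -/
theorem power_map_bijection (m q k d : ℕ) (hm : 1 ≤ m) (hq : 1 ≤ q) (hk : 1 ≤ k)
    (hd : d ∣ m) :
    Set.BijOn
      (fun (t : Fin ((m / d) * q ^ k) → Fin q) (i : Fin (m * q ^ k)) =>
        t ⟨(i : ℕ) % ((m / d) * q ^ k), Nat.mod_lt _ (by
          have hd0 : 0 < d := Nat.pos_of_dvd_of_pos hd hm
          exact Nat.mul_pos (Nat.div_pos (Nat.le_of_dvd hm hd) hd0)
            (pow_pos (by omega) k))⟩)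
      {t | isCycMDB (m / d) q k t ∧ hasOrder ((m / d) * q ^ k) q t 1}
      {s | isCycMDB m q k s ∧ hasOrder (m * q ^ k) q s d} := by
  have hd0 : 0 < d := Nat.pos_of_dvd_of_pos hd hm
  have hq0 : 0 < q := hq
  set n := (m / d) * q ^ k with hn_def
  set M := m * q ^ k with hM_def
  have hn : 0 < n := Nat.mul_pos (Nat.div_pos (Nat.le_of_dvd hm hd) hd0) (pow_pos hq0 k)
  have hM0 : 0 < M := Nat.mul_pos hm (pow_pos hq0 k)
  have hMdn : M = d * n := by
    rw [hM_def, hn_def, ← Nat.mul_assoc, Nat.mul_div_cancel' hd]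
  have hnM : n ∣ M := hMdn ▸ dvd_mul_left n d
  have hMd : M / d = n := by rw [hMdn, Nat.mul_div_cancel_left _ hd0]
  have hnleM : n ≤ M := Nat.le_of_dvd hM0 hnM
  refine ⟨?_, ?_, ?_⟩
  · -- MapsTo
    rintro t ⟨ht1, ht2⟩
    set s : Fin M → Fin q := fun i => t ⟨(i : ℕ) % n, Nat.mod_lt _ hn⟩ with hs_def
    have hs : ∀ i : Fin M, s i = t ⟨(i : ℕ) % n, Nat.mod_lt _ hn⟩ := fun i => rfl
    refine ⟨?_, ?_, ?_⟩
    · -- isCycMDB m q k s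
      intro y
      rw [count_eq hn hMdn t s hs y, ht1 y, Nat.div_mul_cancel hd]
    · -- d in the order set
      refine ⟨Dvd.dvd.mul_right hd _, ?_⟩
      rw [hMd, cshift_eq_iff hM0]
      exact (per_lift_iff hM0 hn hnM t s hs n).2 (per_n hn t)
    · -- upper bound
      rintro e ⟨he1, he2⟩
      have hre : Per hM0 s (M / e) := (cshift_eq_iff hM0 s (M / e)).1 he2
      have hrt : Per hn t (M / e) := (per_lift_iff hM0 hn hnM t s hs (M / e)).1 hre
      have hdvd : n ∣ M / e := per_order_one hn ht2 hrt
      obtain ⟨c, hc⟩ := hdvd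
      have hMe : M = e * (n * c) := by
        rw [← hc]; exact (Nat.mul_div_cancel' he1).symm
      have hce : d = e * c := by
        have h1 : d * n = e * c * n := by
          rw [← hMdn, hMe]; ring
        exact Nat.eq_of_mul_eq_mul_right hn h1
      exact Nat.le_of_dvd hd0 ⟨c, hce⟩
  · -- InjOn
    intro t _ t' _ h
    funext j
    have h1 := congrFun h ⟨(j : ℕ), lt_of_lt_of_le j.isLt hnleM⟩
    have e : (⟨(j : ℕ) % n, Nat.mod_lt _ hn⟩ : Fin n) = j :=
      Fin.ext (Nat.mod_eq_of_lt j.isLt)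
    simp only [] at h1
    rwa [e] at h1
  · -- SurjOn
    rintro s ⟨hs1, ⟨hdM, hshift⟩, hub⟩
    rw [hMd] at hshift
    have hpern : Per hM0 s n := (cshift_eq_iff hM0 s n).1 hshift
    set t : Fin n → Fin q := fun j => s ⟨(j : ℕ), lt_of_lt_of_le j.isLt hnleM⟩ with ht_def
    have hs_eq : ∀ i : Fin M, s i = t ⟨(i : ℕ) % n, Nat.mod_lt _ hn⟩ := by
      intro i
      have h1 := reduce hM0 hnM hn s hpern (i : ℕ)
      calc s i = idx hM0 s (i : ℕ) := (idx_fin hM0 s i).symm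
        _ = idx hM0 s ((i : ℕ) % n) := h1
        _ = t ⟨(i : ℕ) % n, Nat.mod_lt _ hn⟩ := by
            show s ⟨(i : ℕ) % n % M, _⟩ = s ⟨(i : ℕ) % n, _⟩
            congr 1
            exact Fin.ext (Nat.mod_eq_of_lt (lt_of_lt_of_le (Nat.mod_lt _ hn) hnleM))
    refine ⟨t, ⟨?_, ?_, ?_⟩, ?_⟩
    · -- isCycMDB (m/d) q k t
      intro y
      have hc := count_eq hn hMdn t s hs_eq y
      rw [hs1 y] at hc
      show (Finset.univ.filter (fun j : Fin n => cycWin n k q t j = y)).card = m / d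
      rw [hc, Nat.mul_div_cancel _ hd0]
    · -- 1 in order set of t
      refine ⟨one_dvd n, ?_⟩
      show cshift n (n / 1) q t = t
      rw [Nat.div_one, cshift_eq_iff hn]
      exact per_n hn t
    · -- upper bound for t's order
      rintro e ⟨he1, he2⟩
      have he0 : 0 < e := Nat.pos_of_dvd_of_pos he1 hn
      have hpt : Per hn t (n / e) := (cshift_eq_iff hn t (n / e)).1 he2
      have hps : Per hM0 s (n / e) := (per_lift_iff hM0 hn hnM t s hs_eq (n / e)).2 hpt
      obtain ⟨c, hc0⟩ := he1
      have hc : n = e * c := hc0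
      have hed : e * d ∣ M := by
        rw [hMdn, hc]; exact ⟨c, by ring⟩
      have hMed : M / (e * d) = n / e := by
        have h1 : M = (e * d) * c := by rw [hMdn, hc]; ring
        have h2 : n = e * c := hc
        rw [h1, h2, Nat.mul_div_cancel_left _ (Nat.mul_pos he0 hd0),
          Nat.mul_div_cancel_left _ he0]
      have hmem : e * d ∈ {d' : ℕ | d' ∣ M ∧ cshift M (M / d') q s = s} := by
        refine ⟨hed, ?_⟩
        rw [hMed, cshift_eq_iff hM0]
        exact hps
      have hled := hub hmem
      by_contra hcon
      push_neg at hcon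
      have h2 : 2 * d ≤ e * d := Nat.mul_le_mul_right d (by omega)
      have := le_trans h2 hled
      omega
    · -- F t = s
      funext i
      exact (hs_eq i).symm
end

section
/- For m,q,k ≥ 1, d | m, q ≥ 2, and any fixed k-mer y, the number of linearized cyclic multi de Bruijn sequences with parameters (m,q,k) of rotational order d that begin with y equals the number with parameters (m/d,q,k) of order 1 that begin with y. -/
/-- `s` begins with the k-mer y. -/
def startsWith (n k q : ℕ) (s : Fin n → Fin q) (y : Fin k → Fin q) : Prop :=
  ∀ (j : Fin k) (h : (j : ℕ) < n), s ⟨(j : ℕ), h⟩ = y j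

variable {q : ℕ}

lemma cshift_mod (n r : ℕ) (s : Fin n → Fin q) :
    cshift n (r % n) q s = cshift n r q s := by
  funext i
  simp only [cshift]
  congr 1
  exact Fin.ext (Nat.add_mod_mod _ _ _)

lemma cshift_cshift (n a b : ℕ) (s : Fin n → Fin q) :
    cshift n b q (cshift n a q s) = cshift n (a + b) q s := by
  funext i
  simp only [cshift]
  congr 1
  apply Fin.ext
  simp only [Nat.mod_add_mod]
  congr 1
  ring

lemma cshift_zero (n : ℕ) (s : Fin n → Fin q) : cshift n 0 q s = s := by
  funext i
  simp only [cshift, Nat.add_zero, Nat.mod_eq_of_lt i.2, Fin.eta]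

lemma cshift_fixed_mul (n p c : ℕ) (s : Fin n → Fin q) (h : cshift n p q s = s) :
    cshift n (p * c) q s = s := by
  induction c with
  | zero => simpa using cshift_zero n s
  | succ c ih =>
      have : p * (c + 1) = p * c + p := by ring
      rw [this, ← cshift_cshift, ih, h]

lemma exists_mul_mod_gcd (p n : ℕ) (hn : 0 < n) :
    ∃ x : ℕ, (p * x) % n = Nat.gcd p n % n := by
  have hg : (Nat.gcd p n : ℤ) = p * Nat.gcdA p n + n * Nat.gcdB p n := Nat.gcd_eq_gcd_ab p n
  have hnz : (n : ℤ) ≠ 0 := by exact_mod_cast hn.ne'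
  refine ⟨(Nat.gcdA p n % n).toNat, ?_⟩
  have hx : ((Nat.gcdA p n % n).toNat : ℤ) = Nat.gcdA p n % n :=
    Int.toNat_of_nonneg (Int.emod_nonneg _ hnz)
  have key : ((p * (Nat.gcdA p n % n).toNat : ℕ) : ℤ) % n = ((Nat.gcd p n : ℕ) : ℤ) % n := by
    push_cast [hx]
    rw [Int.mul_emod, Int.emod_emod_of_dvd _ dvd_rfl, ← Int.mul_emod]
    rw [hg, mul_comm (n : ℤ) (Nat.gcdB p n), Int.add_mul_emod_self_right]
  have h2 : ((p * (Nat.gcdA p n % n).toNat % n : ℕ) : ℤ) = ((Nat.gcd p n % n : ℕ) : ℤ) := by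
    push_cast
    exact key
  exact_mod_cast h2

lemma cshift_gcd (n p : ℕ) (hn : 0 < n) (s : Fin n → Fin q) (h : cshift n p q s = s) :
    cshift n (Nat.gcd p n) q s = s := by
  obtain ⟨x, hx⟩ := exists_mul_mod_gcd p n hn
  rw [← cshift_mod, hx.symm, cshift_mod]
  exact cshift_fixed_mul n p x s h

lemma apply_mk_congr {α : Sort*} {n : ℕ} (t : Fin n → α) {a b : ℕ} (ha : a < n) (hb : b < n)
    (h : a = b) : t ⟨a, ha⟩ = t ⟨b, hb⟩ := by subst h; rfl

def extw (n n' : ℕ) (h : 0 < n') (t : Fin n' → Fin q) : Fin n → Fin q :=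
  fun i => t ⟨(i : ℕ) % n', Nat.mod_lt _ h⟩

def resw (n n' : ℕ) (h : n' ≤ n) (s : Fin n → Fin q) : Fin n' → Fin q :=
  fun j => s ⟨(j : ℕ), lt_of_lt_of_le j.2 h⟩

lemma resw_extw (n n' : ℕ) (h : 0 < n') (hle : n' ≤ n) (t : Fin n' → Fin q) :
    resw n n' hle (extw n n' h t) = t := by
  funext j
  simp only [resw, extw]
  congr 1
  exact Fin.ext (Nat.mod_eq_of_lt j.2)

lemma extw_resw (n n' : ℕ) (h : 0 < n') (hle : n' ≤ n) (s : Fin n → Fin q)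
    (hfix : cshift n n' q s = s) :
    extw n n' h (resw n n' hle s) = s := by
  funext i
  simp only [extw, resw]
  have hmul : cshift n (n' * ((i : ℕ) / n')) q s = s := cshift_fixed_mul n n' _ s hfix
  have := congrFun hmul ⟨(i : ℕ) % n', lt_of_lt_of_le (Nat.mod_lt _ h) hle⟩
  simp only [cshift] at this
  rw [← this]
  congr 1
  apply Fin.ext
  simp only [Nat.mod_add_div]
  exact Nat.mod_eq_of_lt i.2

lemma cycWin_extw (n n' k : ℕ) (h : 0 < n') (hdvd : n' ∣ n) (t : Fin n' → Fin q)
    (i : Fin n) :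
    cycWin n k q (extw n n' h t) i = cycWin n' k q t ⟨(i : ℕ) % n', Nat.mod_lt _ h⟩ := by
  funext j
  simp only [cycWin, extw]
  congr 1
  apply Fin.ext
  simp only [Nat.mod_mod_of_dvd _ hdvd, Nat.mod_add_mod]

lemma cshift_extw (n n' p : ℕ) (h : 0 < n') (hdvd : n' ∣ n) (t : Fin n' → Fin q)
    (hfix : cshift n' p q t = t) :
    cshift n p q (extw n n' h t) = extw n n' h t := by
  funext i
  simp only [cshift, extw]
  have := congrFun hfix ⟨(i : ℕ) % n', Nat.mod_lt _ h⟩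
  simp only [cshift] at this
  rw [← this]
  congr 1
  apply Fin.ext
  simp only [Nat.mod_mod_of_dvd _ hdvd, Nat.mod_add_mod]

lemma cshift_of_cshift_extw (n n' p : ℕ) (h : 0 < n') (hle : n' ≤ n) (hdvd : n' ∣ n)
    (t : Fin n' → Fin q) (hfix : cshift n p q (extw n n' h t) = extw n n' h t) :
    cshift n' p q t = t := by
  funext j
  have := congrFun hfix ⟨(j : ℕ), lt_of_lt_of_le j.2 hle⟩
  simp only [cshift, extw] at this ⊢
  calc t ⟨((j : ℕ) + p) % n', Nat.mod_lt _ h⟩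
      = t ⟨((j : ℕ) + p) % n % n', Nat.mod_lt _ h⟩ :=
        apply_mk_congr t _ _ (Nat.mod_mod_of_dvd _ hdvd).symm
    _ = t ⟨(j : ℕ) % n', Nat.mod_lt _ h⟩ := this
    _ = t j := congrArg t (Fin.ext (Nat.mod_eq_of_lt j.2))

lemma card_fiber (n n' d : ℕ) (h : 0 < n') (hd : 0 < d) (hn : n = d * n') (j : Fin n') :
    (Finset.univ.filter fun i : Fin n =>
        (⟨(i : ℕ) % n', Nat.mod_lt _ h⟩ : Fin n') = j).card = d := by
  rw [← Fintype.card_subtype]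
  have e : {i : Fin n // (⟨(i : ℕ) % n', Nat.mod_lt _ h⟩ : Fin n') = j} ≃ Fin d := by
    refine ⟨fun i => ⟨(i.1 : ℕ) / n', ?_⟩, fun c => ⟨⟨(j : ℕ) + (c : ℕ) * n', ?_⟩, ?_⟩, ?_, ?_⟩
    · exact (Nat.div_lt_iff_lt_mul h).2 (by rw [← hn]; exact i.1.2)
    · calc (j : ℕ) + (c : ℕ) * n' < n' + (c : ℕ) * n' := by
            exact Nat.add_lt_add_right j.2 _
        _ = ((c : ℕ) + 1) * n' := by ring
        _ ≤ d * n' := Nat.mul_le_mul_right _ (Nat.succ_le_of_lt c.2)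
        _ = n := hn.symm
    · exact Fin.ext (by simp [Nat.add_mul_mod_self_right, Nat.mod_eq_of_lt j.2])
    · rintro ⟨i, hi⟩
      apply Subtype.ext
      apply Fin.ext
      have h1 := Nat.mod_add_div (i : ℕ) n'
      have h2 : (i : ℕ) % n' = (j : ℕ) := congrArg Fin.val hi
      simp only
      calc (j : ℕ) + (i : ℕ) / n' * n' = (i : ℕ) % n' + n' * ((i : ℕ) / n') := by
            rw [h2]; ring
        _ = (i : ℕ) := h1
    · intro c
      apply Fin.ext
      simp only
      rw [Nat.add_mul_div_right _ _ h, Nat.div_eq_of_lt j.2, Nat.zero_add]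
  rw [Fintype.card_congr e, Fintype.card_fin]

lemma card_window_extw (n n' d k : ℕ) (h : 0 < n') (hd : 0 < d) (hn : n = d * n')
    (t : Fin n' → Fin q) (y : Fin k → Fin q) :
    (Finset.univ.filter fun i : Fin n => cycWin n k q (extw n n' h t) i = y).card
      = d * (Finset.univ.filter fun j : Fin n' => cycWin n' k q t j = y).card := by
  classical
  have hdvd : n' ∣ n := ⟨d, by rw [hn, mul_comm]⟩
  set π : Fin n → Fin n' := fun i => ⟨(i : ℕ) % n', Nat.mod_lt _ h⟩ with hπ
  have hfe : (Finset.univ.filter fun i : Fin n => cycWin n k q (extw n n' h t) i = y)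
      = Finset.univ.filter fun i : Fin n => cycWin n' k q t (π i) = y := by
    apply Finset.filter_congr
    intro i _
    rw [cycWin_extw n n' k h hdvd]
  rw [hfe]
  rw [Finset.card_eq_sum_card_fiberwise
    (f := π) (t := Finset.univ.filter fun j : Fin n' => cycWin n' k q t j = y)
    (fun x hx => by simpa using (Finset.mem_filter.1 hx).2)]
  have hinner : ∀ j ∈ (Finset.univ.filter fun j : Fin n' => cycWin n' k q t j = y),
      ((Finset.univ.filter fun i : Fin n => cycWin n' k q t (π i) = y).filter
        fun i => π i = j).card = d := by
    intro j hj
    have hQ : cycWin n' k q t j = y := (Finset.mem_filter.1 hj).2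
    have : ((Finset.univ.filter fun i : Fin n => cycWin n' k q t (π i) = y).filter
        fun i => π i = j) = Finset.univ.filter fun i : Fin n => π i = j := by
      ext i
      simp only [Finset.mem_filter, Finset.mem_univ, true_and, Finset.filter_filter]
      constructor
      · rintro ⟨-, h2⟩; exact h2
      · intro h2; exact ⟨by rw [h2, hQ], h2⟩
    rw [this]
    exact card_fiber n n' d h hd hn j
  rw [Finset.sum_congr rfl hinner, Finset.sum_const, smul_eq_mul, mul_comm]

lemma cshift_self (n : ℕ) (s : Fin n → Fin q) : cshift n n q s = s := by
  rw [← cshift_mod, Nat.mod_self, cshift_zero]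

/-- For m,q,k ≥ 1, d | m, q ≥ 2, and any fixed k-mer y, the number of
linearized cyclic multi de Bruijn sequences with parameters (m,q,k) of rotational
order d beginning with y equals the number with parameters (m/d,q,k) of order 1
beginning with y. -/
theorem card_order_d_eq_card_order_one (m q k d : ℕ) (hm : 1 ≤ m) (hq : 2 ≤ q)
    (hk : 1 ≤ k) (hd : d ∣ m) (y : Fin k → Fin q) :
    Nat.card {s : Fin (m * q ^ k) → Fin q //
        isCycMDB m q k s ∧ hasOrder (m * q ^ k) q s d ∧ startsWith (m * q ^ k) k q s y}
    = Nat.card {t : Fin ((m / d) * q ^ k) → Fin q //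
        isCycMDB (m / d) q k t ∧ hasOrder ((m / d) * q ^ k) q t 1 ∧
          startsWith ((m / d) * q ^ k) k q t y} := by
  classical
  have hd0 : 0 < d := Nat.pos_of_dvd_of_pos hd hm
  have hq0 : 0 < q := by omega
  have hm'1 : 1 ≤ m / d := (Nat.le_div_iff_mul_le hd0).2 (by simpa using Nat.le_of_dvd hm hd)
  have hmd : m = d * (m / d) := (Nat.mul_div_cancel' hd).symm
  set n : ℕ := m * q ^ k with hn
  set n' : ℕ := (m / d) * q ^ k with hn'
  have hn'pos : 0 < n' := Nat.mul_pos hm'1 (Nat.pow_pos hq0)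
  have hnn : n = d * n' := by rw [hn, hn', ← mul_assoc, ← hmd]
  have hle : n' ≤ n := by
    rw [hnn]; exact Nat.le_mul_of_pos_left _ hd0
  have hdvd : n' ∣ n := ⟨d, by rw [hnn]; ring⟩
  have hkle : k ≤ n' := by
    have h1 : k < 2 ^ k := Nat.lt_two_pow_self
    have h2 : 2 ^ k ≤ q ^ k := Nat.pow_le_pow_left hq k
    have h3 : q ^ k ≤ n' := by rw [hn']; exact Nat.le_mul_of_pos_left _ hm'1
    omega
  have hnd : n / d = n' := by rw [hnn, Nat.mul_div_cancel_left _ hd0]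
  -- forward: restriction
  have forward : ∀ s : Fin n → Fin q, isCycMDB m q k s → hasOrder n q s d →
      startsWith n k q s y →
      isCycMDB (m / d) q k (resw n n' hle s) ∧
        hasOrder n' q (resw n n' hle s) 1 ∧ startsWith n' k q (resw n n' hle s) y := by
    intro s hmdb hord hsw
    have hfix : cshift n n' q s = s := by rw [← hnd]; exact hord.1.2
    have hext : extw n n' hn'pos (resw n n' hle s) = s := extw_resw n n' hn'pos hle s hfix
    set t := resw n n' hle s with ht
    refine ⟨?_, ⟨⟨one_dvd _, by rw [Nat.div_one]; exact cshift_self n' t⟩, ?_⟩, ?_⟩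
    · intro z
      have hcount := hmdb z
      rw [← hext] at hcount
      rw [card_window_extw n n' d k hn'pos hd0 hnn t z] at hcount
      exact Nat.eq_of_mul_eq_mul_left hd0 (by rw [hcount, ← hmd])
    · rintro e ⟨hedvd, hefix⟩
      have hsfix : cshift n (n' / e) q s = s := by
        rw [← hext]; exact cshift_extw n n' (n' / e) hn'pos hdvd t hefix
      have hde_dvd : d * e ∣ n := by
        rw [hnn]; exact mul_dvd_mul_left d hedvd
      have hde_div : n / (d * e) = n' / e := by
        rw [hnn]; exact Nat.mul_div_mul_left _ _ hd0
      have := hord.2 ⟨hde_dvd, by rw [hde_div]; exact hsfix⟩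
      -- d * e ≤ d ⇒ e ≤ 1
      nlinarith
    · intro j hj
      simp only [ht, resw]
      exact hsw j (lt_of_lt_of_le hj hle)
  -- backward: extension
  have backward : ∀ t : Fin n' → Fin q, isCycMDB (m / d) q k t → hasOrder n' q t 1 →
      startsWith n' k q t y →
      isCycMDB m q k (extw n n' hn'pos t) ∧
        hasOrder n q (extw n n' hn'pos t) d ∧ startsWith n k q (extw n n' hn'pos t) y := by
    intro t hmdb hord hsw
    refine ⟨?_, ⟨⟨dvd_mul_of_dvd_left hd _, ?_⟩, ?_⟩, ?_⟩
    · intro z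
      rw [card_window_extw n n' d k hn'pos hd0 hnn t z, hmdb z, ← hmd]
    · rw [hnd]
      exact cshift_extw n n' n' hn'pos hdvd t (cshift_self n' t)
    · rintro d' ⟨hd'dvd, hd'fix⟩
      have htfix : cshift n' (n / d') q t = t :=
        cshift_of_cshift_extw n n' (n / d') hn'pos hle hdvd t hd'fix
      have hg : cshift n' (Nat.gcd (n / d') n') q t = t :=
        cshift_gcd n' (n / d') hn'pos t htfix
      set g := Nat.gcd (n / d') n' with hgdef
      have hgdvd : g ∣ n' := Nat.gcd_dvd_right _ _
      have hediv : n' / (n' / g) = g := Nat.div_div_self hgdvd hn'pos.ne'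
      have he1 : n' / g ≤ 1 := hord.2 ⟨Nat.div_dvd_of_dvd hgdvd, by rw [hediv]; exact hg⟩
      have hgpos : 0 < g := Nat.pos_of_dvd_of_pos hgdvd hn'pos  -- wrong direction; fix below
      have he1' : 1 ≤ n' / g := Nat.one_le_div_iff hgpos |>.2 (Nat.le_of_dvd hn'pos hgdvd)
      have heq : n' / g = 1 := le_antisymm he1 he1'
      have hgn' : g = n' := by
        have := hediv
        rw [heq, Nat.div_one] at this
        exact this.symm
      have hn'dvd : n' ∣ n / d' := hgn' ▸ Nat.gcd_dvd_left _ _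
      -- d' ∣ d
      have hd'pos : 0 < d' := Nat.pos_of_dvd_of_pos hd'dvd (by positivity)
      obtain ⟨c, hc⟩ := hn'dvd
      have hnval : n = d' * (n' * c) := by
        rw [← hc, Nat.mul_div_cancel' hd'dvd]
      have hdc : d = d' * c := by
        have : d * n' = d' * c * n' := by rw [← hnn, hnval]; ring
        exact Nat.eq_of_mul_eq_mul_right hn'pos this
      exact Nat.le_of_dvd hd0 ⟨c, hdc⟩
    · intro j hj
      simp only [extw]
      have hjn' : (j : ℕ) % n' = (j : ℕ) := Nat.mod_eq_of_lt (lt_of_lt_of_le j.2 hkle)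
      calc extw n n' hn'pos t ⟨(j : ℕ), hj⟩ = t ⟨(j : ℕ) % n', Nat.mod_lt _ hn'pos⟩ := rfl
        _ = t ⟨(j : ℕ), lt_of_lt_of_le j.2 hkle⟩ := apply_mk_congr t _ _ hjn'
        _ = y j := hsw j _
  apply Nat.card_congr
  refine ⟨fun s => ⟨resw n n' hle s.1, forward s.1 s.2.1 s.2.2.1 s.2.2.2⟩,
          fun t => ⟨extw n n' hn'pos t.1, backward t.1 t.2.1 t.2.2.1 t.2.2.2⟩, ?_, ?_⟩
  · rintro ⟨s, hs1, hs2, hs3⟩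
    apply Subtype.ext
    have hfix : cshift n n' q s = s := by rw [← hnd]; exact hs2.1.2
    exact extw_resw n n' hn'pos hle s hfix
  · rintro ⟨t, ht⟩
    apply Subtype.ext
    exact resw_extw n n' hn'pos hle t
end

section
/- For a finite balanced directed multigraph H with all edges distinguishable, the set of cycle partitions of H (sets of edge-disjoint directed cycles covering every edge exactly once) is in bijection with the set of edge successor maps of H, i.e., functions f: E(H) → E(H) with Head(e) = Tail(f(e)) for all e that restrict to a bijection In(x) → Out(x) at every vertex x. -/
set_option linter.unusedSectionVars false

/-- `P` is a cycle partition of the directed multigraph with edge set `E`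
(edge endpoints given by `Tail`, `Head`): a set of directed cycles
(cycles taken up to rotation, i.e. elements of `Cycle E`) using each edge of
the graph exactly once. -/
def IsCyclePartition {V E : Type*} (Tail Head : E → V) (P : Set (Cycle E)) : Prop :=
  (∀ c ∈ P, c ≠ Cycle.nil ∧ c.Nodup ∧
    Cycle.Chain (fun e e' => Head e = Tail e') c) ∧
  ∀ e : E, ∃! c : Cycle E, c ∈ P ∧ e ∈ c

/-- `f` is an edge successor map: Head(e) = Tail(f(e)) for every edge e, and at
every vertex x, f restricts to a bijection In(x) → Out(x). -/
def IsEdgeSuccessor {V E : Type*} (Tail Head : E → V) (f : E → E) : Prop :=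
  (∀ e : E, Head e = Tail (f e)) ∧
  ∀ x : V, Set.BijOn f {e | Head e = x} {e | Tail e = x}

namespace CPaux

open Function List

variable {α : Type*}

theorem chain_coe_iff_getElem (r : α → α → Prop) (l : List α) :
    Cycle.Chain r (↑l) ↔ ∀ (i : ℕ) (h : i < l.length),
      r (l[i]) (l[(i+1) % l.length]'(Nat.mod_lt _ (Nat.zero_lt_of_lt h))) := by
  rcases l with _ | ⟨a, m⟩
  · simp
  · have key : List.IsChain r (a :: (m ++ [a])) ↔
        (∀ h : 0 < (m ++ [a]).length, r a ((m ++ [a]).get ⟨0, h⟩)) ∧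
        ∀ (i : ℕ) (h : i < (m ++ [a]).length - 1),
          r ((m ++ [a]).get ⟨i, by omega⟩) ((m ++ [a]).get ⟨i + 1, by omega⟩) := by
      rw [List.isChain_iff_getElem]
      constructor
      · intro h
        exact ⟨fun h0 => by simpa using h 0 (by simp),
          fun i hi => h (i + 1) (by simp at hi ⊢; omega)⟩
      · rintro ⟨h0, hs⟩ i hi
        rcases i with _ | i
        · simpa using h0 (by simp)
        · simpa using hs i (by simp at hi ⊢; omega)
    rw [Cycle.chain_coe_cons, key]
    have hlen : (m ++ [a]).length = m.length + 1 := by simp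
    have H : ∀ (i : ℕ) (h : i < m.length + 1),
        (m ++ [a])[i]'(by omega) = (a :: m)[(i+1) % (m.length + 1)]'(Nat.mod_lt _ (by omega)) := by
      intro i h
      rcases Nat.lt_or_ge i m.length with hi | hi
      · rw [List.getElem_append_left hi]
        simp only [Nat.mod_eq_of_lt (show i+1 < m.length+1 by omega)]
        simp
      · have hi' : i = m.length := by omega
        subst hi'
        simp only [Nat.mod_self, List.getElem_cons_zero]
        exact List.getElem_concat_length (l := m) (a := a) rfl _
    constructor
    · rintro ⟨h0, hs⟩ i hi
      simp only [List.length_cons] at hi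
      match i, hi with
      | 0, hi =>
        have := h0 (by simp)
        simp only [List.get_eq_getElem] at this
        rw [H 0 (by omega)] at this
        simpa using this
      | (j+1), hi =>
        have := hs j (by omega)
        simp only [List.get_eq_getElem] at this
        rw [H j (by omega), H (j+1) (by omega)] at this
        have e1 : (j+1) % (m.length + 1) = j + 1 := Nat.mod_eq_of_lt (by omega)
        simp only [e1] at this
        simpa using this
    · intro h
      constructor
      · intro h0
        have := h 0 (by simp)
        simp only [List.get_eq_getElem, List.getElem_cons_zero] at this ⊢
        rw [H 0 (by omega)]
        simpa using this
      · intro j hj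
        rw [hlen] at hj
        have := h (j+1) (by simp; omega)
        simp only [List.get_eq_getElem, List.getElem_cons_succ] at this ⊢
        rw [H j (by omega), H (j+1) (by omega)]
        have e1 : (j+1) % (m.length + 1) = j + 1 := Nat.mod_eq_of_lt (by omega)
        simp only [e1]
        simpa using this

theorem list_chain_iff_formPerm [DecidableEq α] (r : α → α → Prop) (l : List α) (hl : l.Nodup) :
    Cycle.Chain r (↑l) ↔ ∀ x ∈ l, r x (l.formPerm x) := by
  rw [chain_coe_iff_getElem]
  constructor
  · intro h x hx
    obtain ⟨i, hi, rfl⟩ := List.mem_iff_getElem.mp hx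
    rw [List.formPerm_apply_getElem _ hl]
    exact h i hi
  · intro h i hi
    have := h l[i] (l.getElem_mem hi)
    rwa [List.formPerm_apply_getElem _ hl] at this

theorem cycle_chain_iff_formPerm [DecidableEq α] (r : α → α → Prop) (s : Cycle α)
    (hs : s.Nodup) :
    Cycle.Chain r s ↔ ∀ x (hx : x ∈ s), r x (s.formPerm hs x) := by
  induction s using Quot.inductionOn with
  | _ l =>
    have hs' : l.Nodup := hs
    show Cycle.Chain r ↑l ↔ ∀ x (_ : x ∈ (↑l : Cycle α)), r x ((Cycle.formPerm ↑l hs) x)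
    have hfp : Cycle.formPerm (↑l : Cycle α) hs = l.formPerm := Cycle.formPerm_coe l hs'
    rw [list_chain_iff_formPerm r l hs', hfp]
    exact ⟨fun h x hx => h x (Cycle.mem_coe_iff.mp hx),
      fun h x hx => h x (Cycle.mem_coe_iff.mpr hx)⟩

theorem cycle_formPerm_congr [DecidableEq α] {s t : Cycle α} (h : s = t)
    (hs : s.Nodup) (ht : t.Nodup) : s.formPerm hs = t.formPerm ht := by
  subst h; rfl

end CPaux

namespace CPaux2

open Function List CPaux

variable {E : Type*} [Fintype E] [DecidableEq E]

noncomputable def orbitList (σ : Equiv.Perm E) (e : E) : List E :=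
  (List.range (Function.minimalPeriod σ e)).map (fun i => (σ ^ i) e)

theorem minimalPeriod_pos (σ : Equiv.Perm E) (e : E) : 0 < Function.minimalPeriod σ e := by
  apply Function.minimalPeriod_pos_of_mem_periodicPts
  exact Function.mk_mem_periodicPts (orderOf_pos σ)
    (by simp [Function.IsPeriodicPt, Function.IsFixedPt, Equiv.Perm.iterate_eq_pow, pow_orderOf_eq_one])

@[simp] theorem orbitList_length (σ : Equiv.Perm E) (e : E) :
    (orbitList σ e).length = Function.minimalPeriod σ e := by simp [orbitList]

@[simp] theorem orbitList_getElem (σ : Equiv.Perm E) (e : E) (i : ℕ)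
    (h : i < (orbitList σ e).length) : (orbitList σ e)[i] = (σ ^ i) e := by
  simp [orbitList]

theorem orbitList_ne_nil (σ : Equiv.Perm E) (e : E) : orbitList σ e ≠ [] := by
  have := minimalPeriod_pos σ e
  simp [orbitList, List.range_eq_nil]
  omega

theorem pow_apply_mod (σ : Equiv.Perm E) (e : E) (i : ℕ) :
    (σ ^ (i % Function.minimalPeriod σ e)) e = (σ ^ i) e := by
  have h := Function.iterate_mod_minimalPeriod_eq (f := ⇑σ) (x := e) (n := i)
  rw [Equiv.Perm.iterate_eq_pow, Equiv.Perm.iterate_eq_pow] at h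
  exact h

theorem orbitList_nodup (σ : Equiv.Perm E) (e : E) : (orbitList σ e).Nodup := by
  refine List.Nodup.map_on ?_ List.nodup_range
  intro i hi j hj hij
  simp only [List.mem_range] at hi hj
  have := Function.iterate_injOn_Iio_minimalPeriod (f := ⇑σ) (x := e) (Set.mem_Iio.mpr hi)
    (Set.mem_Iio.mpr hj)
  simp only [Equiv.Perm.iterate_eq_pow] at this
  exact this hij

theorem mem_orbitList (σ : Equiv.Perm E) (e x : E) :
    x ∈ orbitList σ e ↔ ∃ i, (σ ^ i) e = x := by
  simp only [orbitList, List.mem_map, List.mem_range]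
  constructor
  · rintro ⟨i, _, rfl⟩; exact ⟨i, rfl⟩
  · rintro ⟨i, rfl⟩
    exact ⟨i % _, Nat.mod_lt _ (minimalPeriod_pos σ e), pow_apply_mod σ e i⟩

theorem self_mem_orbitList (σ : Equiv.Perm E) (e : E) : e ∈ orbitList σ e :=
  (mem_orbitList σ e e).mpr ⟨0, rfl⟩

theorem orbitList_formPerm (σ : Equiv.Perm E) (e : E) :
    ∀ y ∈ orbitList σ e, σ y = (orbitList σ e).formPerm y := by
  intro y hy
  obtain ⟨i, hi, rfl⟩ := List.mem_iff_getElem.mp hy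
  rw [List.formPerm_apply_getElem _ (orbitList_nodup σ e), orbitList_getElem,
    orbitList_getElem, orbitList_length]
  rw [orbitList_length] at hi
  rw [pow_apply_mod σ e (i+1), ← Equiv.Perm.mul_apply, ← pow_succ']

/-- Master lemma: if `σ` agrees with `l.formPerm` on `l`, the orbit cycle of any
element of `l` is `l` itself. -/
theorem orbitList_eq_of_formPerm (σ : Equiv.Perm E) (l : List E) (hn : l.Nodup)
    (hne : l ≠ []) (hσ : ∀ y ∈ l, σ y = l.formPerm y) (x : E) (hx : x ∈ l) :
    (↑(orbitList σ x) : Cycle E) = ↑l := by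
  set n := l.length with hnl
  have hn0 : 0 < n := List.length_pos_iff.mpr hne
  set k := l.idxOf x with hk
  have hkn : k < n := List.idxOf_lt_length_iff.mpr hx
  have hlk : l[k] = x := List.getElem_idxOf hkn
  have A : ∀ i : ℕ, (σ ^ i) x = l[(k + i) % n]'(Nat.mod_lt _ hn0) := by
    intro i
    induction i with
    | zero => simpa [Nat.mod_eq_of_lt hkn] using hlk.symm
    | succ i ih =>
      have hmem : l[(k + i) % n]'(Nat.mod_lt _ hn0) ∈ l := List.getElem_mem _
      rw [pow_succ', Equiv.Perm.mul_apply, ih, hσ _ hmem,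
        List.formPerm_apply_getElem _ hn]
      congr 1
      rw [← hnl, Nat.mod_add_mod, ← Nat.add_assoc]
  have hper : Function.IsPeriodicPt (⇑σ) n x := by
    show (⇑σ)^[n] x = x
    rw [Equiv.Perm.iterate_eq_pow, A n]
    simpa [Nat.add_mod_left, Nat.mod_eq_of_lt hkn] using hlk
  have hmp : Function.minimalPeriod (⇑σ) x = n := by
    have h1 : Function.minimalPeriod (⇑σ) x ∣ n := hper.minimalPeriod_dvd
    have hmp0 : 0 < Function.minimalPeriod (⇑σ) x := minimalPeriod_pos σ x
    refine Nat.dvd_antisymm h1 ?_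
    set m := Function.minimalPeriod (⇑σ) x with hm
    have h2 : (σ ^ m) x = x := by
      have := Function.isPeriodicPt_minimalPeriod (⇑σ) x
      rwa [Function.IsPeriodicPt, Function.IsFixedPt, Equiv.Perm.iterate_eq_pow] at this
    rw [A m] at h2
    rw [← hlk] at h2
    have h3 := (List.Nodup.getElem_inj_iff hn).mp h2
    have h4 : (k + m) % n = k % n := by
      rw [h3, Nat.mod_eq_of_lt hkn]
    have hmod : m % n = 0 % n :=
      Nat.ModEq.add_left_cancel' k h4
    exact Nat.dvd_of_mod_eq_zero (by simpa using hmod)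
  have C : orbitList σ x = l.rotate k := by
    apply List.ext_getElem
    · simp [hmp, ← hnl]
    · intro j h1 h2
      rw [orbitList_getElem, List.getElem_rotate, A j]
      congr 1
      rw [← hnl, Nat.add_comm]
  rw [C, Cycle.coe_eq_coe]
  exact List.IsRotated.forall l k

section Graph

variable {V : Type*} (Tail Head : E → V)

/-- The cycle partition induced by a compatible permutation. -/
noncomputable def toPart (σ : Equiv.Perm E) : Set (Cycle E) :=
  Set.range fun e => (↑(orbitList σ e) : Cycle E)

theorem toPart_isCyclePartition (σ : Equiv.Perm E) (hσ : ∀ e, Head e = Tail (σ e)) :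
    IsCyclePartition Tail Head (toPart σ) := by
  constructor
  · rintro c ⟨e, rfl⟩
    refine ⟨by simp [Cycle.coe_eq_nil, orbitList_ne_nil], orbitList_nodup σ e, ?_⟩
    rw [list_chain_iff_formPerm _ _ (orbitList_nodup σ e)]
    intro x hx
    rw [← orbitList_formPerm σ e x hx]
    exact hσ x
  · intro e
    refine ⟨↑(orbitList σ e), ⟨⟨e, rfl⟩, Cycle.mem_coe_iff.mpr (self_mem_orbitList σ e)⟩, ?_⟩
    rintro c ⟨⟨e', rfl⟩, hec⟩
    exact (orbitList_eq_of_formPerm σ (orbitList σ e') (orbitList_nodup σ e')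
      (orbitList_ne_nil σ e') (orbitList_formPerm σ e') e (Cycle.mem_coe_iff.mp hec)).symm

variable {P : Set (Cycle E)}

/-- The successor map induced by a cycle partition. -/
noncomputable def nextMap (hP : IsCyclePartition Tail Head P) (e : E) : E :=
  Cycle.formPerm ((hP.2 e).choose) ((hP.1 _ (hP.2 e).choose_spec.1.1).2.1) e

theorem choose_eq (hP : IsCyclePartition Tail Head P) {c : Cycle E} (hc : c ∈ P)
    {e : E} (he : e ∈ c) : (hP.2 e).choose = c :=
  ((hP.2 e).choose_spec.2 c ⟨hc, he⟩).symm

theorem nextMap_eq (hP : IsCyclePartition Tail Head P) {c : Cycle E} (hc : c ∈ P)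
    {e : E} (he : e ∈ c) :
    nextMap Tail Head hP e = Cycle.formPerm c ((hP.1 c hc).2.1) e := by
  unfold nextMap
  exact congrFun (congrArg _ (cycle_formPerm_congr (choose_eq Tail Head hP hc he) _ _)) e

theorem nextMap_mem (hP : IsCyclePartition Tail Head P) {c : Cycle E} (hc : c ∈ P)
    {e : E} (he : e ∈ c) : nextMap Tail Head hP e ∈ c := by
  rw [nextMap_eq Tail Head hP hc he,
    Cycle.formPerm_apply_mem_eq_next c ((hP.1 c hc).2.1) e he]
  exact Cycle.next_mem c _ e he

theorem nextMap_injective (hP : IsCyclePartition Tail Head P) :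
    Function.Injective (nextMap Tail Head hP) := by
  intro a b hab
  have hca := (hP.2 a).choose_spec.1
  have hcb := (hP.2 b).choose_spec.1
  have hma : nextMap Tail Head hP a ∈ (hP.2 a).choose :=
    nextMap_mem Tail Head hP hca.1 hca.2
  have hmb : nextMap Tail Head hP b ∈ (hP.2 b).choose :=
    nextMap_mem Tail Head hP hcb.1 hcb.2
  have hceq : (hP.2 a).choose = (hP.2 b).choose := by
    have := (hP.2 (nextMap Tail Head hP a)).unique ⟨hca.1, hma⟩ ⟨hcb.1, hab ▸ hmb⟩
    exact this
  have hb' : b ∈ (hP.2 a).choose := hceq ▸ hcb.2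
  have h1 : nextMap Tail Head hP a =
      Cycle.formPerm ((hP.2 a).choose) ((hP.1 _ hca.1).2.1) a := rfl
  have h2 : nextMap Tail Head hP b =
      Cycle.formPerm ((hP.2 a).choose) ((hP.1 _ hca.1).2.1) b :=
    nextMap_eq Tail Head hP hca.1 hb'
  rw [h1, h2] at hab
  exact (Cycle.formPerm _ _).injective hab

/-- The permutation induced by a cycle partition. -/
noncomputable def nextPerm (hP : IsCyclePartition Tail Head P) : Equiv.Perm E :=
  Equiv.ofBijective _ (Finite.injective_iff_bijective.mp (nextMap_injective Tail Head hP))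

theorem nextPerm_apply (hP : IsCyclePartition Tail Head P) (e : E) :
    nextPerm Tail Head hP e = nextMap Tail Head hP e := rfl

theorem nextPerm_compat (hP : IsCyclePartition Tail Head P) (e : E) :
    Head e = Tail (nextPerm Tail Head hP e) := by
  have hc := (hP.2 e).choose_spec.1
  have hchain := (hP.1 _ hc.1).2.2
  rw [cycle_chain_iff_formPerm _ _ ((hP.1 _ hc.1).2.1)] at hchain
  exact hchain e hc.2

/-- Key lemma: the orbit cycle of `nextPerm` through any `e ∈ c ∈ P` is `c`. -/
theorem orbit_nextPerm_eq (hP : IsCyclePartition Tail Head P) {c : Cycle E} (hc : c ∈ P)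
    {e : E} (he : e ∈ c) :
    (↑(orbitList (nextPerm Tail Head hP) e) : Cycle E) = c := by
  obtain ⟨l, rfl⟩ := Quot.exists_rep c
  rw [Cycle.mk_eq_coe] at hc he ⊢
  have hl : l.Nodup := (hP.1 _ hc).2.1
  have hlne : l ≠ [] := by
    have := (hP.1 _ hc).1
    simpa [Cycle.coe_eq_nil] using this
  refine orbitList_eq_of_formPerm _ l hl hlne ?_ e (Cycle.mem_coe_iff.mp he)
  intro y hy
  rw [nextPerm_apply, nextMap_eq Tail Head hP hc (Cycle.mem_coe_iff.mpr hy),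
    Cycle.formPerm_coe l hl]

theorem toPart_nextPerm (hP : IsCyclePartition Tail Head P) :
    toPart (nextPerm Tail Head hP) = P := by
  ext c
  constructor
  · rintro ⟨e, rfl⟩
    have hc := (hP.2 e).choose_spec.1
    show (↑(orbitList (nextPerm Tail Head hP) e) : Cycle E) ∈ P
    rw [orbit_nextPerm_eq Tail Head hP hc.1 hc.2]
    exact hc.1
  · intro hc
    obtain ⟨l, rfl⟩ := Quot.exists_rep c
    rw [Cycle.mk_eq_coe] at hc ⊢
    have hlne : l ≠ [] := by
      have := (hP.1 _ hc).1
      simpa [Cycle.coe_eq_nil] using this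
    obtain ⟨e, he⟩ := List.exists_mem_of_ne_nil l hlne
    exact ⟨e, orbit_nextPerm_eq Tail Head hP hc (Cycle.mem_coe_iff.mpr he)⟩

theorem nextPerm_toPart (σ : Equiv.Perm E) (hσ : ∀ e, Head e = Tail (σ e))
    (hP : IsCyclePartition Tail Head (toPart σ)) :
    nextPerm Tail Head hP = σ := by
  apply Equiv.ext
  intro e
  have horb : (↑(orbitList σ e) : Cycle E) ∈ toPart σ := ⟨e, rfl⟩
  have hemem : e ∈ (↑(orbitList σ e) : Cycle E) :=
    Cycle.mem_coe_iff.mpr (self_mem_orbitList σ e)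
  rw [nextPerm_apply, nextMap_eq Tail Head hP horb hemem,
    Cycle.formPerm_coe _ (orbitList_nodup σ e)]
  exact (orbitList_formPerm σ e e (self_mem_orbitList σ e)).symm

end Graph

end CPaux2

section PartA

open CPaux2

variable {V E : Type*} [Fintype E] (Tail Head : E → V)

theorem perm_isEdgeSuccessor (σ : Equiv.Perm E) (hσ : ∀ e, Head e = Tail (σ e)) :
    IsEdgeSuccessor Tail Head σ := by
  refine ⟨hσ, fun x => ⟨?_, σ.injective.injOn, ?_⟩⟩
  · intro e he
    simp only [Set.mem_setOf_eq] at he ⊢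
    rw [← hσ e, he]
  · intro e' he'
    simp only [Set.mem_setOf_eq] at he'
    refine ⟨σ.symm e', ?_, by simp⟩
    simp only [Set.mem_setOf_eq]
    rw [hσ (σ.symm e'), Equiv.apply_symm_apply, he']

theorem edgeSuccessor_injective (f : E → E) (hf : IsEdgeSuccessor Tail Head f) :
    Function.Injective f := by
  intro a b hab
  have hx : Head a = Head b := by
    rw [hf.1 a, hf.1 b, hab]
  exact (hf.2 (Head a)).2.1 rfl hx.symm hab

end PartA

/-- For a finite balanced directed multigraph H, the set of cycle
partitions of H is in bijection with the set of edge successor maps of H. -/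
theorem cycle_partitions_equiv_edge_successors {V E : Type*} [Fintype V] [Fintype E]
    (Tail Head : E → V)
    (hbal : ∀ x : V, Nat.card {e : E // Head e = x} = Nat.card {e : E // Tail e = x}) :
    Nonempty ({P : Set (Cycle E) // IsCyclePartition Tail Head P} ≃
      {f : E → E // IsEdgeSuccessor Tail Head f}) := by
  classical
  refine ⟨⟨fun P => ⟨⇑(CPaux2.nextPerm Tail Head P.2), perm_isEdgeSuccessor Tail Head _
      (CPaux2.nextPerm_compat Tail Head P.2)⟩,
    fun f => ⟨CPaux2.toPart (Equiv.ofBijective f.1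
      (Finite.injective_iff_bijective.mp (edgeSuccessor_injective Tail Head f.1 f.2))),
      CPaux2.toPart_isCyclePartition Tail Head _ (fun e => f.2.1 e)⟩, ?_, ?_⟩⟩
  · rintro ⟨P, hP⟩
    apply Subtype.ext
    simp only
    set σ := Equiv.ofBijective _ (Finite.injective_iff_bijective.mp
      (edgeSuccessor_injective Tail Head _ (perm_isEdgeSuccessor Tail Head _
        (CPaux2.nextPerm_compat Tail Head hP)))) with hσ
    have hσeq : σ = CPaux2.nextPerm Tail Head hP := by
      apply Equiv.ext; intro e; rfl
    rw [hσeq]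
    exact CPaux2.toPart_nextPerm Tail Head hP
  · rintro ⟨f, hf⟩
    apply Subtype.ext
    simp only
    set σ := Equiv.ofBijective f (Finite.injective_iff_bijective.mp
      (edgeSuccessor_injective Tail Head f hf)) with hσ
    have : ⇑(CPaux2.nextPerm Tail Head (CPaux2.toPart_isCyclePartition Tail Head σ
        (fun e => hf.1 e))) = ⇑σ := by
      rw [CPaux2.nextPerm_toPart Tail Head σ (fun e => hf.1 e)]
    rw [this]
    rfl
end

section
/- The number of cycle partitions of a finite balanced directed multigraph H equals the product over all vertices x of (Outdeg(x))!. -/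
open Function

section AuxCycle

variable {α : Type*}

theorem List.get_append {l₁ l₂ : List α} (n : Nat) (h : n < l₁.length) :
    (l₁ ++ l₂).get ⟨n, List.length_append .. ▸ Nat.lt_add_right _ h⟩ = l₁.get ⟨n, h⟩ := by
  simp [List.getElem_append_left h]

theorem CardCyclePartitions.isChain_cons_iff_get {R : α → α → Prop} {a : α} {l : List α} :
    List.IsChain R (a :: l) ↔ (∀ h : 0 < l.length, R a (l.get ⟨0, h⟩)) ∧
      ∀ (i : ℕ) (h : i < l.length - 1), R (l.get ⟨i, by omega⟩) (l.get ⟨i+1, by omega⟩) := by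
  induction l generalizing a with
  | nil => simp
  | cons b l ih =>
    rw [List.isChain_cons_cons, ih]
    constructor
    · rintro ⟨hab, h0, hi⟩
      refine ⟨fun _ => hab, fun i hi' => ?_⟩
      cases i with
      | zero => exact h0 (by simp at hi'; omega)
      | succ i => exact hi i (by simp at hi'; omega)
    · rintro ⟨h0, hi⟩
      exact ⟨h0 (by simp), fun h => hi 0 (by simp; omega), fun i h => hi (i+1) (by simp; omega)⟩

/-- Along a functional chain, entries are iterates. -/
lemma CardCyclePartitions.chain_iterate {f : α → α} : ∀ {a : α} {l : List α},
    List.Chain (fun x y => f x = y) a l → ∀ i (h : i < l.length), l.get ⟨i, h⟩ = f^[i+1] a := by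
  intro a l hc
  induction l generalizing a with
  | nil => intro i h; simp at h
  | cons b l ih =>
    have hab : f a = b := (List.isChain_cons_cons.1 hc).1
    have hl : List.Chain (fun x y => f x = y) b l := (List.isChain_cons_cons.1 hc).2
    intro i h
    cases i with
    | zero => simpa using hab.symm
    | succ j =>
      have := ih hl j (by simpa using h)
      simp only [List.get_cons_succ]
      rw [this, ← hab, ← Function.iterate_succ_apply]

/-- A nodup functional cyclic chain is exactly the orbit list, and determines
the minimal period. -/
lemma CardCyclePartitions.cyclic_chain_eq_orbit {f : α → α} {a : α} {l : List α}
    (hc : List.Chain (fun x y => f x = y) a (l ++ [a])) (hn : (a :: l).Nodup) :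
    (∀ j (h : j < l.length + 1), (a :: l).get ⟨j, h⟩ = f^[j] a) ∧
      minimalPeriod f a = l.length + 1 := by
  set n := l.length with hnl
  have hlen : (l ++ [a]).length = n + 1 := by simp [hnl]
  have hget := CardCyclePartitions.chain_iterate hc
  have hl : ∀ i (h : i < n), l.get ⟨i, h⟩ = f^[i+1] a := by
    intro i h
    have := hget i (by omega)
    rwa [List.get_append i h] at this
  have ha : f^[n+1] a = a := by
    have := hget n (by omega)
    rw [show ((l ++ [a]).get ⟨n, by omega⟩) = a by
      simp [List.getElem_append_right (le_refl n)]] at this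
    exact this.symm
  have hgets : ∀ j (h : j < n + 1), (a :: l).get ⟨j, h⟩ = f^[j] a := by
    intro j h
    cases j with
    | zero => simp
    | succ i => simpa using hl i (by omega)
  refine ⟨hgets, ?_⟩
  have hper : IsPeriodicPt f (n+1) a := ha
  have hmem : a ∈ periodicPts f := ⟨n+1, by omega, hper⟩
  have hle : minimalPeriod f a ≤ n + 1 := hper.minimalPeriod_le (by omega)
  have hpos : 0 < minimalPeriod f a := minimalPeriod_pos_iff_mem_periodicPts.2 hmem
  rcases lt_or_eq_of_le hle with hlt | heq
  · exfalso
    have h1 : (a :: l).get ⟨minimalPeriod f a, by simpa using hlt⟩ = f^[minimalPeriod f a] a :=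
      hgets _ (by simpa using hlt)
    have h2 : (a :: l).get ⟨0, by simp⟩ = a := rfl
    have : (a :: l).get ⟨minimalPeriod f a, by simpa using hlt⟩ = (a :: l).get ⟨0, by simp⟩ := by
      rw [h1, h2, iterate_minimalPeriod]
    have := (hn.get_inj_iff.mp this)
    simp only [Fin.mk.injEq] at this
    omega
  · exact heq

/-- A nodup cycle with functional chain containing `e` is the periodic orbit of `e`. -/
lemma CardCyclePartitions.cycle_eq_periodicOrbit {f : α → α} (s : Cycle α) (hs : s.Nodup)
    (hc : Cycle.Chain (fun x y => f x = y) s) {e : α} (he : e ∈ s) :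
    s = Function.periodicOrbit f e ∧ e ∈ periodicPts f := by
  induction s using Quotient.inductionOn' with
  | h l =>
    rw [Cycle.mk''_eq_coe] at hs hc he ⊢
    have hel : e ∈ l := by simpa using he
    obtain ⟨l₁, l₂, rfl⟩ := List.append_of_mem hel
    have hcoe : (↑(l₁ ++ e :: l₂) : Cycle α) = ↑(e :: (l₂ ++ l₁)) := Cycle.coe_eq_coe.2
      (by simpa using (List.isRotated_append (l := l₁) (l' := e :: l₂)))
    rw [hcoe] at hs hc ⊢
    have hn : (e :: (l₂ ++ l₁)).Nodup := Cycle.nodup_coe_iff.1 hs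
    have hch : List.Chain (fun x y => f x = y) e ((l₂ ++ l₁) ++ [e]) :=
      (Cycle.chain_coe_cons _ _ _).1 hc
    obtain ⟨hget, hmp⟩ := CardCyclePartitions.cyclic_chain_eq_orbit hch hn
    have hmem : e ∈ periodicPts f := minimalPeriod_pos_iff_mem_periodicPts.1 (by omega)
    refine ⟨?_, hmem⟩
    rw [periodicOrbit_def, hmp]
    rw [Cycle.coe_eq_coe]
    have : (e :: (l₂ ++ l₁)) = (List.range ((l₂ ++ l₁).length + 1)).map fun n => f^[n] e := by
      apply List.ext_get
      · simp
      · intro i h1 h2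
        rw [hget i (by simpa using h1)]
        simp only [List.get_eq_getElem, List.getElem_map, List.getElem_range]
    rw [this]

lemma CardCyclePartitions.cycle_next_coe [DecidableEq α] (l : List α) (hs : Cycle.Nodup (l : Cycle α))
    (x : α) (hx : x ∈ (↑l : Cycle α)) :
    Cycle.next ↑l hs x hx = List.next l x (by simpa using hx) := rfl

lemma CardCyclePartitions.next_congr [DecidableEq α] (s s' : Cycle α) (h : s = s')
    (hs : s.Nodup) (hs' : s'.Nodup) (x : α) (hx : x ∈ s) (hx' : x ∈ s') :
    s.next hs x hx = s'.next hs' x hx' := by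
  subst h; rfl

lemma CardCyclePartitions.next_head_aux [DecidableEq α] {r : α → α → Prop} (x : α) (m : List α)
    (hch : List.Chain r x (m ++ [x])) (hx : x ∈ x :: m) : r x (List.next (x :: m) x hx) := by
  cases m with
  | nil =>
    rw [List.next_singleton]
    simpa [List.Chain] using hch
  | cons b t =>
    rw [List.next_cons_cons_eq]
    rw [List.cons_append] at hch
    exact (List.isChain_cons_cons.1 hch).1

/-- From a cyclic chain, the relation holds from each element to its successor. -/
lemma CardCyclePartitions.chain_rel_next [DecidableEq α] {r : α → α → Prop} (s : Cycle α)
    (hs : s.Nodup) (hc : Cycle.Chain r s) (x : α) (hx : x ∈ s) : r x (s.next hs x hx) := by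
  induction s using Quotient.inductionOn' with
  | h l =>
    have hel : x ∈ l := by simpa [Cycle.mk''_eq_coe] using hx
    obtain ⟨l₁, l₂, rfl⟩ := List.append_of_mem hel
    have hcoe : (Quotient.mk'' (l₁ ++ x :: l₂) : Cycle α) = (↑(x :: (l₂ ++ l₁)) : Cycle α) := by
      rw [Cycle.mk''_eq_coe]
      exact Cycle.coe_eq_coe.2
        (by simpa using (List.isRotated_append (l := l₁) (l' := x :: l₂)))
    have hs' : (↑(x :: (l₂ ++ l₁)) : Cycle α).Nodup := by rw [← hcoe]; exact hs
    have hmem' : x ∈ (↑(x :: (l₂ ++ l₁)) : Cycle α) := by simp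
    rw [CardCyclePartitions.next_congr _ _ hcoe hs hs' x hx hmem',
      CardCyclePartitions.cycle_next_coe]
    rw [hcoe] at hc
    have hch : List.Chain r x ((l₂ ++ l₁) ++ [x]) := (Cycle.chain_coe_cons _ _ _).1 hc
    exact CardCyclePartitions.next_head_aux x (l₂ ++ l₁) hch _

/-- Conversely, if `f` sends each element of a nodup cycle to its successor,
the cycle is an `f`-chain. -/
lemma CardCyclePartitions.chain_of_next [DecidableEq α] {f : α → α} (s : Cycle α) (hs : s.Nodup)
    (h : ∀ x (hx : x ∈ s), f x = s.next hs x hx) :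
    Cycle.Chain (fun x y => f x = y) s := by
  induction s using Quotient.inductionOn' with
  | h l =>
    rw [Cycle.mk''_eq_coe]
    cases l with
    | nil => simp
    | cons a t =>
      have hn : (a :: t).Nodup := by
        have := hs; rw [Cycle.mk''_eq_coe, Cycle.nodup_coe_iff] at this; exact this
      have hnext : ∀ x (hx : x ∈ a :: t), f x = List.next (a :: t) x hx := by
        intro x hx
        exact h x (by simpa [Cycle.mk''_eq_coe] using hx)
      set n := t.length with hnt
      have idx_congr : ∀ (j k : ℕ) (hj : j < n + 1) (hk : k < n + 1), j = k →
          (a :: t).get ⟨j, by simpa using hj⟩ = (a :: t).get ⟨k, by simpa using hk⟩ := by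
        intro j k hj hk hjk; subst hjk; rfl
      rw [Cycle.chain_coe_cons, CardCyclePartitions.isChain_cons_iff_get]
      constructor
      · intro h0
        have h1 : f a = (a :: t).get ⟨1 % (n + 1), Nat.lt_of_lt_of_le (Nat.mod_lt _ (Nat.succ_pos n)) (by simp [hnt])⟩ := by
          have := List.next_getElem (a :: t) hn 0 (by simp)
          simpa using (hnext a (by simp)).trans this
        rw [h1]
        rcases Nat.eq_zero_or_pos n with hn0 | hn0
        · have ht : t = [] := List.length_eq_zero_iff.1 hn0
          subst ht
          simp
        · rw [idx_congr (1 % (n+1)) 1 (Nat.mod_lt _ (by omega)) (by omega)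
            (Nat.mod_eq_of_lt (by omega))]
          rw [List.get_cons_succ, List.get_append 0 hn0]
      · intro i hi
        have hi' : i < n := by simpa using hi
        have hli : (t ++ [a]).get ⟨i, by simp; omega⟩ = (a :: t).get ⟨i + 1, by simp; omega⟩ := by
          rw [List.get_append i hi', List.get_cons_succ]
        rw [hli]
        have h2 : f ((a :: t).get ⟨i + 1, by simp; omega⟩)
            = (a :: t).get ⟨(i + 2) % (n + 1), Nat.lt_of_lt_of_le (Nat.mod_lt _ (Nat.succ_pos n)) (by simp [hnt])⟩ := by
          have := List.next_getElem (a :: t) hn (i + 1) (by simp; omega)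
          simpa using (hnext _ (List.get_mem _ _)).trans this
        rw [h2]
        rcases Nat.lt_or_ge (i + 1) n with hlt | hge
        · rw [idx_congr ((i+2) % (n+1)) (i+2) (Nat.mod_lt _ (by omega)) (by omega)
            (Nat.mod_eq_of_lt (by omega))]
          rw [List.get_cons_succ, List.get_append (i+1) hlt]
        · have hin : i + 1 = n := by omega
          rw [idx_congr ((i+2) % (n+1)) 0 (Nat.mod_lt _ (by omega)) (by omega)
            (by rw [show i + 2 = n + 1 by omega, Nat.mod_self])]
          have ha : (t ++ [a]).get ⟨i + 1, by simp; omega⟩ = a := by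
            simp [List.getElem_append_right (by omega : t.length ≤ i + 1), hin, hnt]
          rw [ha]
          rfl

lemma CardCyclePartitions.cycle_exists_mem (c : Cycle α) (h : c ≠ Cycle.nil) : ∃ e, e ∈ c := by
  induction c using Quotient.inductionOn' with
  | h l =>
    cases l with
    | nil => exact absurd rfl h
    | cons a t => exact ⟨a, by simp [Cycle.mk''_eq_coe]⟩

end AuxCycle

namespace CardCyclePartitions

variable {V E : Type*} [Fintype V] [Fintype E] (Tail Head : E → V)

omit [Fintype V] in
lemma perm_periodicPts (σ : Equiv.Perm E) (e : E) : e ∈ periodicPts ⇑σ := by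
  refine ⟨orderOf σ, orderOf_pos σ, ?_⟩
  show σ^[orderOf σ] e = e
  rw [show σ^[orderOf σ] = ⇑(σ ^ orderOf σ) from rfl, pow_orderOf_eq_one]
  rfl

omit [Fintype V] in
lemma range_periodicOrbit_isCyclePartition (σ : Equiv.Perm E)
    (hσ : ∀ e, Tail (σ e) = Head e) :
    IsCyclePartition Tail Head (Set.range (Function.periodicOrbit ⇑σ)) := by
  constructor
  · rintro c ⟨e, rfl⟩
    refine ⟨?_, nodup_periodicOrbit, ?_⟩
    · rw [Ne, periodicOrbit_eq_nil_iff_not_periodic_pt]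
      simpa using perm_periodicPts σ e
    · rw [periodicOrbit_chain' _ (perm_periodicPts σ e)]
      intro n
      rw [iterate_succ_apply']
      exact (hσ _).symm
  · intro e
    refine ⟨Function.periodicOrbit ⇑σ e,
      ⟨⟨e, rfl⟩, self_mem_periodicOrbit (perm_periodicPts σ e)⟩, ?_⟩
    rintro c ⟨⟨e', rfl⟩, hec⟩
    obtain ⟨n, hn⟩ := (mem_periodicOrbit_iff (perm_periodicPts σ e')).1 hec
    rw [← hn, periodicOrbit_apply_iterate_eq (perm_periodicPts σ e')]

omit [Fintype V] [Fintype E] in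
lemma periodicOrbit_chain_self (f : E → E) (x : E) (hx : x ∈ periodicPts f) :
    Cycle.Chain (fun a b => f a = b) (Function.periodicOrbit f x) := by
  rw [periodicOrbit_chain' _ hx]
  intro n
  exact (iterate_succ_apply' f n x).symm

omit [Fintype V] in
lemma main_equiv_bij [DecidableEq E] :
    Function.Bijective (fun (σ : {σ : Equiv.Perm E // ∀ e, Tail (σ e) = Head e}) =>
      (⟨Set.range (Function.periodicOrbit ⇑σ.1),
        range_periodicOrbit_isCyclePartition Tail Head σ.1 σ.2⟩ :
        {P : Set (Cycle E) // IsCyclePartition Tail Head P})) := by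
  constructor
  · rintro ⟨σ, hσ⟩ ⟨σ', hσ'⟩ h
    simp only [Subtype.mk.injEq] at h
    refine Subtype.ext (Equiv.ext fun e => ?_)
    have h1 : Function.periodicOrbit ⇑σ' e ∈ Set.range (Function.periodicOrbit ⇑σ) := by
      rw [h]; exact ⟨e, rfl⟩
    obtain ⟨e'', h2⟩ := h1
    have he : e ∈ Function.periodicOrbit ⇑σ e'' := by
      rw [h2]; exact self_mem_periodicOrbit (perm_periodicPts σ' e)
    obtain ⟨n, hn⟩ := (mem_periodicOrbit_iff (perm_periodicPts σ e'')).1 he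
    have hEq : Function.periodicOrbit ⇑σ e = Function.periodicOrbit ⇑σ' e := by
      rw [← h2, ← hn, periodicOrbit_apply_iterate_eq (perm_periodicPts σ e'')]
    have hnd : (Function.periodicOrbit ⇑σ e).Nodup := nodup_periodicOrbit
    have hmem : e ∈ Function.periodicOrbit ⇑σ e :=
      self_mem_periodicOrbit (perm_periodicPts σ e)
    have c1 : σ e = (Function.periodicOrbit ⇑σ e).next hnd e hmem :=
      chain_rel_next _ hnd (periodicOrbit_chain_self ⇑σ e (perm_periodicPts σ e)) e hmem
    have c2 : σ' e = (Function.periodicOrbit ⇑σ e).next hnd e hmem := by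
      have hch : Cycle.Chain (fun a b => σ' a = b) (Function.periodicOrbit ⇑σ e) := by
        rw [hEq]; exact periodicOrbit_chain_self ⇑σ' e (perm_periodicPts σ' e)
      exact chain_rel_next _ hnd hch e hmem
    rw [c1, c2]
  · rintro ⟨P, hP⟩
    choose cyc h1 h2 using fun e => hP.2 e
    have hnd : ∀ e, (cyc e).Nodup := fun e => (hP.1 _ (h1 e).1).2.1
    set g : E → E := fun e => (cyc e).next (hnd e) e (h1 e).2 with hg
    have htail : ∀ e, Tail (g e) = Head e := fun e =>
      (chain_rel_next _ (hnd e) ((hP.1 _ (h1 e).1).2.2) e (h1 e).2).symm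
    have hchain : ∀ c ∈ P, Cycle.Chain (fun a b => g a = b) c := by
      intro c hc
      have hndc : c.Nodup := (hP.1 c hc).2.1
      apply chain_of_next c hndc
      intro x hx
      have hcx : cyc x = c := (h2 x c ⟨hc, hx⟩).symm
      exact next_congr (cyc x) c hcx (hnd x) hndc x (h1 x).2 hx
    have horb : ∀ c ∈ P, ∀ e, ∀ he : e ∈ c,
        c = Function.periodicOrbit g e ∧ e ∈ periodicPts g :=
      fun c hc e he => cycle_eq_periodicOrbit c ((hP.1 c hc).2.1) (hchain c hc) he
    have ginj : Function.Injective g := by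
      intro a b hab
      have hca := horb (cyc a) (h1 a).1 a (h1 a).2
      have hcb := horb (cyc b) (h1 b).1 b (h1 b).2
      have hga : g a ∈ cyc a := Cycle.next_mem _ _ _ _
      have hgb : g b ∈ cyc b := Cycle.next_mem _ _ _ _
      have hceq : cyc a = cyc b :=
        (h2 (g a) (cyc a) ⟨(h1 a).1, hga⟩).trans (h2 (g a) (cyc b) ⟨(h1 b).1, hab ▸ hgb⟩).symm
      have hbmem : b ∈ Function.periodicOrbit g a := by
        rw [← hca.1, hceq]
        exact (h1 b).2
      obtain ⟨m, hm⟩ := (mem_periodicOrbit_iff hca.2).1 hbmem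
      set n := minimalPeriod g a with hn
      have npos : 0 < n := minimalPeriod_pos_iff_mem_periodicPts.2 hca.2
      have h5 : g^[(m+1) % n] a = g^[1 % n] a := by
        rw [iterate_mod_minimalPeriod_eq, iterate_mod_minimalPeriod_eq]
        rw [iterate_succ_apply', hm, ← hab]
        rfl
      have hmod : (m+1) % n = 1 % n :=
        iterate_injOn_Iio_minimalPeriod (Nat.mod_lt _ npos) (Nat.mod_lt _ npos) h5
      have hdvd : m % n = 0 := by
        have : m ≡ 0 [MOD n] := Nat.ModEq.add_right_cancel' 1 hmod
        simpa [Nat.ModEq] using this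
      calc a = g^[0] a := rfl
        _ = g^[m % n] a := by rw [hdvd]
        _ = g^[m] a := iterate_mod_minimalPeriod_eq
        _ = b := hm
    have gbij : Function.Bijective g := Finite.injective_iff_bijective.1 ginj
    refine ⟨⟨Equiv.ofBijective g gbij, htail⟩, ?_⟩
    apply Subtype.ext
    show Set.range (Function.periodicOrbit ⇑(Equiv.ofBijective g gbij)) = P
    have hcoe : ⇑(Equiv.ofBijective g gbij) = g := rfl
    rw [hcoe]
    ext c
    constructor
    · rintro ⟨e, rfl⟩
      have h3 := horb (cyc e) (h1 e).1 e (h1 e).2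
      rw [← h3.1]
      exact (h1 e).1
    · intro hc
      obtain ⟨e, he⟩ := cycle_exists_mem c (hP.1 c hc).1
      exact ⟨e, ((horb c hc e he).1).symm⟩

omit [Fintype V] [Fintype E] in
/-- The permutations compatible with the graph structure are equivalent to
families of bijections between in-edges and out-edges at every vertex. -/
noncomputable def permCondEquiv :
    {σ : Equiv.Perm E // ∀ e, Tail (σ e) = Head e}
      ≃ ∀ x : V, ({e : E // Head e = x} ≃ {e : E // Tail e = x}) where
  toFun σ x :=
    { toFun := fun e => ⟨σ.1 e.1, by rw [σ.2]; exact e.2⟩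
      invFun := fun e => ⟨σ.1.symm e.1, by
        rw [← σ.2 (σ.1.symm e.1), Equiv.apply_symm_apply]; exact e.2⟩
      left_inv := fun e => by apply Subtype.ext; simp
      right_inv := fun e => by apply Subtype.ext; simp }
  invFun F :=
    ⟨(Equiv.sigmaFiberEquiv Head).symm.trans
      ((Equiv.sigmaCongrRight F).trans (Equiv.sigmaFiberEquiv Tail)),
      fun e => (F (Head e) ⟨e, rfl⟩).2⟩
  left_inv σ := by
    apply Subtype.ext
    apply Equiv.ext
    intro e
    rfl
  right_inv F := by
    funext x
    apply Equiv.ext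
    rintro ⟨e, rfl⟩
    rfl

lemma card_perm_cond (hbal : ∀ x : V, Nat.card {e : E // Head e = x}
      = Nat.card {e : E // Tail e = x}) :
    Nat.card {σ : Equiv.Perm E // ∀ e, Tail (σ e) = Head e}
      = ∏ x : V, (Nat.card {e : E // Tail e = x}).factorial := by
  classical
  rw [Nat.card_congr (permCondEquiv Tail Head), Nat.card_pi]
  refine Finset.prod_congr rfl fun x _ => ?_
  have h1 : Fintype.card {e : E // Head e = x} = Fintype.card {e : E // Tail e = x} := by
    rw [← Nat.card_eq_fintype_card, ← Nat.card_eq_fintype_card]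
    exact hbal x
  rw [Nat.card_eq_fintype_card, Fintype.card_equiv (Fintype.equivOfCardEq h1),
    ← Nat.card_eq_fintype_card, hbal x]

end CardCyclePartitions

/-- The number of cycle partitions of a finite balanced directed
multigraph equals the product over all vertices x of (Outdeg(x))!. -/
theorem card_cycle_partitions {V E : Type*} [Fintype V] [Fintype E]
    (Tail Head : E → V)
    (hbal : ∀ x : V, Nat.card {e : E // Head e = x} = Nat.card {e : E // Tail e = x}) :
    Nat.card {P : Set (Cycle E) // IsCyclePartition Tail Head P}
      = ∏ x : V, (Nat.card {e : E // Tail e = x}).factorial := by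
  classical
  rw [Nat.card_congr
    (Equiv.ofBijective _ (CardCyclePartitions.main_equiv_bij Tail Head)).symm]
  exact CardCyclePartitions.card_perm_cond Tail Head hbal
end

section
/- Let s = t^d where t is a primitive word of length r and d ≥ 1, and let BWT(t) = a₁a₂⋯a_r be the last column of the sorted table of the r rotations of t. Then BWT(s), the last column of the lexicographically sorted table of all rd rotations of s, equals a₁^d a₂^d ⋯ a_r^d. -/
/-- A word is primitive (the cycle it represents is aperiodic) if it is nonempty
and all of its rotations are distinct. -/
def Primitive {α : Type*} (l : List α) : Prop :=
  l ≠ [] ∧ ∀ n : ℕ, 0 < n → n < l.length → l.rotate n ≠ l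

/-- The Burrows–Wheeler transform of a word u: list all |u| cyclic rotations of
u, sort them lexicographically, and read the last column top to bottom. -/
def bwt {α : Type*} [LinearOrder α] [Inhabited α] (u : List α) : List α :=
  (((List.range u.length).map (fun i => u.rotate i)).mergeSort
      (fun a b => decide (a ≤ b))).map (fun l => l.getLastD default)

open scoped List

section Aux

variable {α : Type*}

lemma flatten_replicate_nil (d : ℕ) : (List.replicate d ([] : List α)).flatten = [] := by
  induction d with
  | zero => rfl
  | succ d ih => simp [List.replicate_succ, ih]

lemma repjoin (u v : List α) : ∀ k, u ++ ((List.replicate k (v ++ u)).flatten ++ v)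
    = (List.replicate (k + 1) (u ++ v)).flatten
  | 0 => by simp
  | k + 1 => by
    simp only [List.replicate_succ, List.flatten_cons]
    rw [show (v ++ u) ++ (List.replicate k (v ++ u)).flatten ++ v
        = v ++ (u ++ ((List.replicate k (v ++ u)).flatten ++ v)) by
      simp [List.append_assoc], repjoin u v k]
    simp only [List.replicate_succ, List.flatten_cons, List.append_assoc]

lemma length_flatten_replicate (d : ℕ) (t : List α) :
    (List.replicate d t).flatten.length = d * t.length := by
  induction d with
  | zero => simp
  | succ d ih => simp [List.replicate_succ, ih, Nat.succ_mul, Nat.add_comm]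

lemma rotate_flatten_replicate (e : ℕ) (t : List α) {j : ℕ} (hj : j ≤ t.length) :
    ((List.replicate (e + 1) t).flatten).rotate j
      = (List.replicate (e + 1) (t.rotate j)).flatten := by
  have hlen : j ≤ ((List.replicate (e + 1) t).flatten).length := by
    rw [length_flatten_replicate]
    calc j ≤ t.length := hj
    _ ≤ (e + 1) * t.length := Nat.le_mul_of_pos_left _ (Nat.succ_pos e)
  rw [List.rotate_eq_drop_append_take hlen]
  conv_lhs =>
    rw [List.replicate_succ, List.flatten_cons,
      List.drop_append, List.take_append,
      Nat.sub_eq_zero_of_le hj]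
  simp only [List.drop_zero, List.take_zero, List.append_nil]
  rw [List.rotate_eq_drop_append_take hj, ← repjoin (t.drop j) (t.take j) e,
    List.take_append_drop]
  simp [List.append_assoc]

lemma flatten_replicate_perm (d : ℕ) : ∀ (B : List α),
    (List.replicate d B).flatten ~ (B.map (fun x => List.replicate d x)).flatten
  | [] => by simp [flatten_replicate_nil]
  | x :: B => by
    have key : ∀ k, (List.replicate k (x :: B)).flatten
        ~ List.replicate k x ++ (List.replicate k B).flatten := by
      intro k
      induction k with
      | zero => simp
      | succ k ih =>
        simp only [List.replicate_succ, List.flatten_cons, List.cons_append]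
        refine List.Perm.cons x ?_
        calc B ++ (List.replicate k (x :: B)).flatten
            ~ B ++ (List.replicate k x ++ (List.replicate k B).flatten) :=
              ih.append_left B
          _ ~ List.replicate k x ++ (B ++ (List.replicate k B).flatten) :=
              List.perm_append_comm_assoc B _ _
    calc (List.replicate d (x :: B)).flatten
        ~ List.replicate d x ++ (List.replicate d B).flatten := key d
      _ ~ List.replicate d x ++ (B.map (fun y => List.replicate d y)).flatten :=
          (flatten_replicate_perm d B).append_left _
      _ = ((x :: B).map (fun y => List.replicate d y)).flatten := by simp

variable [LinearOrder α]

lemma lex_append_of_lex {u v : List α} (h : List.Lex (· < ·) u v)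
    (hlen : u.length = v.length) :
    ∀ (w w' : List α), List.Lex (· < ·) (u ++ w) (v ++ w') := by
  induction h with
  | nil => intro w w'; simp at hlen
  | @cons a as bs h ih =>
      intro w w'
      exact List.Lex.cons (ih (by simpa using hlen) w w')
  | @rel a as b bs h => intro w w'; exact List.Lex.rel h

lemma pow_mono (e : ℕ) {u v : List α} (hlen : u.length = v.length) (h : u ≤ v) :
    (List.replicate (e + 1) u).flatten ≤ (List.replicate (e + 1) v).flatten := by
  rcases eq_or_lt_of_le h with rfl | hlt
  · exact le_rfl
  · refine le_of_lt ?_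
    have hlex : List.Lex (· < ·) u v := hlt
    have : List.Lex (· < ·) (u ++ (List.replicate e u).flatten)
        (v ++ (List.replicate e v).flatten) := lex_append_of_lex hlex hlen _ _
    show List.Lex (· < ·) _ _
    simpa [List.replicate_succ, List.flatten_cons] using this

omit [LinearOrder α] in
lemma getLastD_flatten_replicate [Inhabited α] (e : ℕ) {u : List α} (hu : u ≠ []) :
    ((List.replicate (e + 1) u).flatten).getLastD default = u.getLastD default := by
  rw [List.replicate_succ', List.flatten_append]
  obtain ⟨y, hy⟩ : ∃ y, u.getLast? = some y := by
    cases hx : u.getLast? with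
    | none => exact absurd (List.getLast?_eq_none_iff.mp hx) hu
    | some y => exact ⟨y, rfl⟩
  simp [List.getLastD_eq_getLast?, List.getLast?_append, hy]

end Aux

/-- If s = t^d with t primitive of length r, d ≥ 1, and
BWT(t) = a₁a₂⋯a_r, then BWT(s) = a₁^d a₂^d ⋯ a_r^d. -/
theorem bwt_power (α : Type*) [LinearOrder α] [Inhabited α]
    (t : List α) (ht : Primitive t) (d : ℕ) (hd : 1 ≤ d) :
    bwt ((List.replicate d t).flatten)
      = ((bwt t).map (fun a => List.replicate d a)).flatten := by
  obtain ⟨e, rfl⟩ : ∃ e, d = e + 1 := ⟨d - 1, (Nat.succ_pred_eq_of_pos hd).symm⟩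
  obtain ⟨htne, -⟩ := ht
  set r := t.length with hr
  have hr0 : 0 < r := List.length_pos_iff.mpr htne
  set f : List α → List α := fun u => (List.replicate (e + 1) u).flatten with hf
  set s : List α := (List.replicate (e + 1) t).flatten with hs
  -- rotations of s are powers of rotations of t
  have hsrot : ∀ i, s.rotate i = f (t.rotate i) := by
    have h1 : s.rotate r = s := by
      have := rotate_flatten_replicate e t (le_refl t.length)
      simpa [List.rotate_length] using this
    have h2 : ∀ k, s.rotate (r * k) = s := by
      intro k
      induction k with
      | zero => simp
      | succ k ih => rw [Nat.mul_succ, ← List.rotate_rotate, ih, h1]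
    intro i
    calc s.rotate i = s.rotate (r * (i / r) + i % r) := by rw [Nat.div_add_mod]
      _ = (s.rotate (r * (i / r))).rotate (i % r) := (List.rotate_rotate s _ _).symm
      _ = s.rotate (i % r) := by rw [h2]
      _ = f (t.rotate (i % r)) :=
          rotate_flatten_replicate e t (le_of_lt (Nat.mod_lt _ hr0))
      _ = f (t.rotate i) := by rw [List.rotate_mod]
  have hslen : s.length = r * (e + 1) := by
    rw [hs, length_flatten_replicate, Nat.mul_comm]
  set Lt : List (List α) := (List.range r).map (fun i => t.rotate i) with hLt
  set M : List (List α) := Lt.mergeSort (fun a b => decide (a ≤ b)) with hM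
  -- the list of rotations of s, in blocks
  have hmaprange : ∀ dd : ℕ, (List.range (r * dd)).map (fun i => s.rotate i)
      = (List.replicate dd (Lt.map f)).flatten := by
    intro dd
    induction dd with
    | zero => simp
    | succ k ih =>
      rw [Nat.mul_succ, List.range_add, List.map_append, ih, List.replicate_succ',
        List.flatten_append]
      simp only [List.flatten_cons, List.flatten_nil, List.append_nil]
      congr 1
      rw [hLt, List.map_map, List.map_map]
      refine List.map_congr_left ?_
      intro j hj
      rw [List.mem_range] at hj
      have hmod : (r * k + j) % r = j := by
        rw [Nat.mul_add_mod, Nat.mod_eq_of_lt hj]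
      simp only [Function.comp]
      rw [hsrot, ← List.rotate_mod t (r * k + j), ← hr, hmod]
  -- members of M are rotations of t
  have hMmem : ∀ u ∈ M, ∃ i, u = t.rotate i := by
    intro u hu
    rw [hM, List.mem_mergeSort, hLt, List.mem_map] at hu
    obtain ⟨i, _, rfl⟩ := hu
    exact ⟨i, rfl⟩
  have hMlen : ∀ u ∈ M, u.length = r := by
    intro u hu
    obtain ⟨i, rfl⟩ := hMmem u hu
    rw [List.length_rotate]
  have hMne : ∀ u ∈ M, u ≠ [] := by
    intro u hu h
    rw [h] at hu
    have := hMlen _ hu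
    simp at this
    omega
  have hMsorted : M.Pairwise (· ≤ ·) := by
    have := List.pairwise_mergeSort
      (le := fun a b : List α => decide (a ≤ b))
      (fun a b c h₁ h₂ => by
        simp only [decide_eq_true_eq] at *; exact le_trans h₁ h₂)
      (fun a b => by
        simp only [Bool.or_eq_true, decide_eq_true_eq]; exact le_total a b) Lt
    exact this.imp (fun h => by simpa using h)
  -- the sorted list of rotations of s
  have key : ((List.range s.length).map (fun i => s.rotate i)).mergeSort
      (fun a b => decide (a ≤ b))
      = (M.map (fun u => List.replicate (e + 1) (f u))).flatten := by
    refine (fun hp h1 h2 => List.Perm.eq_of_pairwise' (r := (· ≤ · : List α → List α → Prop)) h1 h2 hp) ?_ ?_ ?_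
    · -- permutation
      calc ((List.range s.length).map (fun i => s.rotate i)).mergeSort
            (fun a b => decide (a ≤ b))
          ~ (List.range s.length).map (fun i => s.rotate i) :=
            List.mergeSort_perm _ _
        _ = (List.replicate (e + 1) (Lt.map f)).flatten := by
            rw [hslen, hmaprange]
        _ ~ ((Lt.map f).map (fun x => List.replicate (e + 1) x)).flatten :=
            flatten_replicate_perm _ _
        _ = (Lt.map (fun u => List.replicate (e + 1) (f u))).flatten := by
            rw [List.map_map]; rfl
        _ ~ (M.map (fun u => List.replicate (e + 1) (f u))).flatten :=
            ((List.mergeSort_perm Lt _).symm.map _).flatten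
    · -- first sorted
      have := List.pairwise_mergeSort
        (le := fun a b : List α => decide (a ≤ b))
        (fun a b c h₁ h₂ => by
          simp only [decide_eq_true_eq] at *; exact le_trans h₁ h₂)
        (fun a b => by
          simp only [Bool.or_eq_true, decide_eq_true_eq]; exact le_total a b)
        ((List.range s.length).map (fun i => s.rotate i))
      exact this.imp (fun h => by simpa using h)
    · -- second sorted
      rw [List.pairwise_flatten]
      refine ⟨?_, ?_⟩
      · intro l hl
        rw [List.mem_map] at hl
        obtain ⟨u, _, rfl⟩ := hl
        rw [List.pairwise_replicate]
        right; exact le_refl _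
      · rw [List.pairwise_map]
        refine (List.Pairwise.and_mem.mp hMsorted).imp ?_
        intro a b hab x hx y hy
        obtain ⟨hu, hv, huv⟩ := hab
        rw [List.eq_of_mem_replicate hx, List.eq_of_mem_replicate hy]
        exact pow_mono e ((hMlen _ hu).trans (hMlen _ hv).symm) huv
  -- conclude
  rw [bwt, bwt, key, ← hM, List.map_flatten, List.map_map, List.map_map]
  congr 1
  refine List.map_congr_left ?_
  intro u hu
  simp only [Function.comp]
  rw [List.map_replicate]
  congr 1
  exact getLastD_flatten_replicate e (hMne u hu)
end

section
/- A word w of length n over a totally ordered alphabet is in the image of the Burrows–Wheeler transform (i.e., w = BWT(s) for some word s of length n) if and only if the inverse Extended Burrows–Wheeler Transform of w is a multiset consisting of d copies of a single aperiodic cycle (t) for some primitive word t with d·|t| = n; in that case BWT⁻¹(w) = t^d up to rotation. -/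
/-- The Extended Burrows–Wheeler Transform of a multicyclic sequence, represented
as a multiset L of primitive words (one linearization per aperiodic cycle, with
multiplicity): let c be the lcm of the word lengths; for each word s of L (with
multiplicity) and each rotation ρ^j(s), form the row (ρ^j(s))^{c/|s|}; sort all
rows lexicographically and read the last column.  Since the EBWT is a bijection
from multicyclic sequences of total length n to words of length n, the inverse
EBWT of w equals σ iff EBWT(σ) = w. -/
noncomputable def ebwt {α : Type*} [LinearOrder α] [Inhabited α]
    (L : Multiset (List α)) : List α :=
  letI c := ((L.map List.length).toList).foldr Nat.lcm 1
  letI rows := (L.toList).flatMap (fun s =>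
    (List.range s.length).map (fun j =>
      (List.replicate (c / s.length) (s.rotate j)).flatten))
  (rows.mergeSort (fun a b => decide (a ≤ b))).map (fun l => l.getLastD default)

open scoped List
set_option linter.unusedSectionVars false
set_option maxHeartbeats 1000000

namespace BWTProof
variable {α : Type*} [LinearOrder α] [Inhabited α] {β : Type*} {γ : Type*}
variable {α : Type*} [LinearOrder α] [Inhabited α] {β : Type*} {γ : Type*}



lemma lt_iff_lex {a b : List α} : a < b ↔ List.Lex (· < ·) a b := Iff.rfl

lemma lex_take {a b : List α} (h : List.Lex (· < ·) a b) :
    ∀ k : ℕ, List.Lex (· < ·) (a.take k) (b.take k) ∨ a.take k = b.take k := by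
  induction h with
  | nil =>
    intro k
    cases k with
    | zero => right; rfl
    | succ k => left; exact List.Lex.nil
  | @cons x as bs h ih =>
    intro k
    cases k with
    | zero => right; rfl
    | succ k =>
      rcases ih k with h' | h'
      · left; exact List.Lex.cons h'
      · right; simp [h']
  | rel h =>
    intro k
    cases k with
    | zero => right; rfl
    | succ k => left; exact List.Lex.rel h

lemma take_le_take {a b : List α} (h : a ≤ b) (k : ℕ) : a.take k ≤ b.take k := by
  rcases lt_or_eq_of_le h with h' | h'
  · rcases lex_take (lt_iff_lex.mp h') k with h'' | h''
    · exact le_of_lt (lt_iff_lex.mpr h'')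
    · exact le_of_eq h''
  · subst h'; exact le_rfl

lemma lex_append {a b : List α} (h : List.Lex (· < ·) a b) (hlen : a.length = b.length)
    (u v : List α) : List.Lex (· < ·) (a ++ u) (b ++ v) := by
  induction h with
  | nil => simp at hlen
  | @cons x as bs h ih =>
    simp only [List.length_cons, Nat.add_right_cancel_iff] at hlen
    exact List.Lex.cons (ih hlen)
  | rel h => exact List.Lex.rel h

/-- power of a word -/
def pw (d : ℕ) (t : List β) : List β := (List.replicate d t).flatten

@[simp] lemma pw_zero (t : List β) : pw 0 t = [] := rfl

@[simp] lemma pw_succ (d : ℕ) (t : List β) : pw (d+1) t = t ++ pw d t := by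
  simp [pw, List.replicate_succ]

@[simp] lemma length_pw (d : ℕ) (t : List β) : (pw d t).length = d * t.length := by
  induction d with
  | zero => simp
  | succ d ih => simp [ih, Nat.succ_mul]; ring

lemma pw_le_pw {a b : List α} (d : ℕ) (hlen : a.length = b.length) (h : a ≤ b) :
    pw d a ≤ pw d b := by
  rcases lt_or_eq_of_le h with h' | h'
  · cases d with
    | zero => exact le_rfl
    | succ d =>
      simp only [pw_succ]
      exact le_of_lt (lt_iff_lex.mpr (lex_append (lt_iff_lex.mp h') hlen _ _))
  · subst h'; exact le_rfl



lemma pw_append (e : ℕ) (a b : List β) : pw e (a ++ b) ++ a = a ++ pw e (b ++ a) := by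
  induction e with
  | zero => simp
  | succ e ih => simp only [pw_succ, List.append_assoc, ih]

lemma rotate_pw {t : List β} {m : ℕ} (hm : m ≤ t.length) (e : ℕ) :
    (pw e t).rotate m = pw e (t.rotate m) := by
  cases e with
  | zero => simp [List.rotate_nil]
  | succ e =>
    have hm' : m ≤ (pw (e+1) t).length := by
      simp only [length_pw]
      calc m ≤ t.length := hm
        _ ≤ (e+1) * t.length := Nat.le_mul_of_pos_left _ (Nat.succ_pos e)
    rw [List.rotate_eq_drop_append_take hm', List.rotate_eq_drop_append_take hm]
    simp only [pw_succ]
    rw [List.drop_append_of_le_length hm, List.take_append_of_le_length hm]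
    have h1 := pw_append e (t.take m) (t.drop m)
    rw [List.take_append_drop] at h1
    calc (t.drop m ++ pw e t) ++ t.take m
        = t.drop m ++ (pw e t ++ t.take m) := by simp [List.append_assoc]
      _ = t.drop m ++ (t.take m ++ pw e (t.drop m ++ t.take m)) := by rw [h1]
      _ = (t.drop m ++ t.take m) ++ pw e (t.drop m ++ t.take m) := by simp [List.append_assoc]

lemma rotate_pw_mul (t : List β) (e q : ℕ) : (pw e t).rotate (q * t.length) = pw e t := by
  induction q with
  | zero => simp
  | succ q ih =>
    rw [Nat.succ_mul, ← List.rotate_rotate, ih, rotate_pw le_rfl, List.rotate_length]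

lemma rotate_pw_mod {t : List β} (ht : t ≠ []) (e i : ℕ) :
    (pw e t).rotate i = pw e (t.rotate (i % t.length)) := by
  have hp : 0 < t.length := List.length_pos_iff.mpr ht
  conv_lhs => rw [show i = t.length * (i / t.length) + i % t.length from (Nat.div_add_mod i t.length).symm]
  rw [← List.rotate_rotate, Nat.mul_comm, rotate_pw_mul,
    rotate_pw (le_of_lt (Nat.mod_lt i hp))]

lemma pw_ne_nil {t : List β} (ht : t ≠ []) {e : ℕ} (he : 0 < e) : pw e t ≠ [] := by
  rw [← List.length_pos_iff, length_pw]
  exact Nat.mul_pos he (List.length_pos_iff.mpr ht)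

lemma getLastD_pw [Inhabited β] {t : List β} (ht : t ≠ []) {e : ℕ} (he : 0 < e) :
    (pw e t).getLastD default = t.getLastD default := by
  induction e with
  | zero => omega
  | succ e ih =>
    cases Nat.eq_zero_or_pos e with
    | inl h => subst h; simp
    | inr h =>
      obtain ⟨x, hx⟩ := Option.isSome_iff_exists.mp (List.getLast?_isSome.mpr (pw_ne_nil ht h))
      calc (pw (e+1) t).getLastD default = (pw e t).getLastD default := by
            rw [pw_succ, List.getLastD_eq_getLast?, List.getLastD_eq_getLast?,
              List.getLast?_append, hx]
            simp
        _ = t.getLastD default := ih h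


def rws (s : List β) : List (List β) := (List.range s.length).map (fun i => s.rotate i)

lemma mem_rws {s r : List β} (h : r ∈ rws s) : ∃ i, r = s.rotate i := by
  simp only [rws, List.mem_map, List.mem_range] at h
  obtain ⟨i, _, hi⟩ := h
  exact ⟨i, hi.symm⟩

lemma length_of_mem_rws {s r : List β} (h : r ∈ rws s) : r.length = s.length := by
  obtain ⟨i, rfl⟩ := mem_rws h
  exact List.length_rotate s i

lemma self_mem_rws {s : List β} (hs : s ≠ []) : s ∈ rws s := by
  simp only [rws, List.mem_map, List.mem_range]
  exact ⟨0, List.length_pos_iff.mpr hs, List.rotate_zero s⟩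

lemma rws_rot1 (s : List β) : ((rws s).map (fun r => r.rotate 1)).Perm (rws s) := by
  rcases eq_or_ne s [] with rfl | hs
  · simp [rws]
  have hn : 0 < s.length := List.length_pos_iff.mpr hs
  have key : s :: (rws s).map (fun r => r.rotate 1) = rws s ++ [s] := by
    have h1 : (rws s).map (fun r => r.rotate 1) =
        (List.range s.length).map (fun i => s.rotate (i+1)) := by
      simp only [rws, List.map_map]
      exact List.map_congr_left (fun i _ => List.rotate_rotate s i 1)
    have h2 : (List.range (s.length + 1)).map (fun i => s.rotate i) =
        s :: (List.range s.length).map (fun i => s.rotate (i+1)) := by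
      rw [List.range_succ_eq_map]
      simp [List.map_map, List.rotate_zero, Function.comp, Nat.succ_eq_add_one]
    have h3 : (List.range (s.length + 1)).map (fun i => s.rotate i) =
        rws s ++ [s] := by
      rw [List.range_succ, List.map_append]
      simp [rws, List.rotate_length]
    rw [h1, ← h2, h3]
  have hperm : (s :: (rws s).map (fun r => r.rotate 1)).Perm (s :: rws s) := by
    rw [key]
    exact List.perm_append_singleton s (rws s)
  exact hperm.cons_inv

lemma rws_rotate_perm (s : List β) (k : ℕ) :
    ((rws s).map (fun r => r.rotate k)).Perm (rws s) := by
  induction k with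
  | zero => simp [List.rotate_zero]
  | succ k ih =>
    have h1 : (rws s).map (fun r => r.rotate (k+1)) =
        ((rws s).map (fun r => r.rotate k)).map (fun r => r.rotate 1) := by
      rw [List.map_map]
      exact List.map_congr_left (fun r _ => (List.rotate_rotate r k 1).symm)
    rw [h1]
    exact (ih.map _).trans (rws_rot1 s)




lemma sorted_msort (l : List (List α)) :
    List.Pairwise (· ≤ ·) (l.mergeSort (fun a b => decide (a ≤ b))) := by
  have h := List.pairwise_mergeSort (le := fun a b : List α => decide (a ≤ b))
    (by intro a b c hab hbc; simp only [decide_eq_true_eq] at *; exact le_trans hab hbc)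
    (by intro a b; simpa using le_total a b) l
  exact h.imp (by simp)

lemma msort_congr {l l' : List (List α)} (h : l.Perm l') :
    l.mergeSort (fun a b => decide (a ≤ b)) = l'.mergeSort (fun a b => decide (a ≤ b)) :=
  List.Perm.eq_of_pairwise (fun _ _ _ _ h h' => le_antisymm h h')
    (sorted_msort l) (sorted_msort l')
    ((List.mergeSort_perm l _).trans (h.trans (List.mergeSort_perm l' _).symm))

lemma map_cons_zipWith (g : β → γ) (h : β → List γ) (L : List β) :
    L.map (fun r => g r :: h r) = List.zipWith List.cons (L.map g) (L.map h) := by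
  induction L with
  | nil => rfl
  | cons a L ih => simp only [List.map_cons, List.zipWith_cons_cons, ih]

lemma getLast_eq_getLastD' {r : List α} (h : r ≠ []) : r.getLast h = r.getLastD default := by
  rw [List.getLastD_eq_getLast?, List.getLast?_eq_getLast h]; rfl

lemma rotate_take {r : List α} {n k : ℕ} (hr : r.length = n) (hn : 0 < n) (hk : k < n) :
    (r.rotate (n-1)).take (k+1) = r.getLastD default :: r.take k := by
  have hne : r ≠ [] := by
    rw [← List.length_pos_iff, hr]; exact hn
  have hdrop : r.drop (n-1) = [r.getLast hne] := by
    conv_lhs => rw [← List.dropLast_append_getLast hne]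
    rw [show n - 1 = r.dropLast.length by simp [List.length_dropLast, hr], List.drop_left]
  have htk : r.take (n-1) = r.dropLast := by
    rw [List.dropLast_eq_take, hr]
  rw [List.rotate_eq_drop_append_take (by omega : n - 1 ≤ r.length), hdrop, htk,
    List.singleton_append, List.take_succ_cons, List.dropLast_eq_take, List.take_take,
    min_eq_left (by omega : k ≤ r.length - 1), getLast_eq_getLastD' hne]

lemma key_perm {n : ℕ} (hn : 0 < n) {l l' : List (List α)}
    (hl : ∀ r ∈ l, r.length = n) (hl' : ∀ r ∈ l', r.length = n)
    (hc : (l.map (fun r => r.rotate (n-1))).Perm l)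
    (hc' : (l'.map (fun r => r.rotate (n-1))).Perm l')
    (hlast : (l.mergeSort (fun a b => decide (a ≤ b))).map (fun r => r.getLastD default)
           = (l'.mergeSort (fun a b => decide (a ≤ b))).map (fun r => r.getLastD default)) :
    l.Perm l' := by
  set L := l.mergeSort (fun a b => decide (a ≤ b)) with hL
  set L' := l'.mergeSort (fun a b => decide (a ≤ b)) with hL'
  have hLp : L.Perm l := List.mergeSort_perm l _
  have hL'p : L'.Perm l' := List.mergeSort_perm l' _
  have hlen : l.length = l'.length := by
    have := congrArg List.length hlast
    simpa [hL, hL', List.length_mergeSort] using this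
  have main : ∀ k, (l.map (fun r => r.take k)).Perm (l'.map (fun r => r.take k)) := by
    intro k
    induction k with
    | zero =>
      simp only [List.take_zero]
      rw [List.map_const', List.map_const', hlen]
    | succ k ih =>
      by_cases hk : k < n
      · have step2 : ∀ (m : List (List α)), (∀ r ∈ m, r.length = n) →
            (m.map (fun r => r.rotate (n-1))).map (fun r => r.take (k+1)) =
            m.map (fun r => r.getLastD default :: r.take k) := by
          intro m hm
          rw [List.map_map]
          exact List.map_congr_left (fun r hr => rotate_take (hm r hr) hn hk)
        have htake : L.map (fun r => r.take k) = L'.map (fun r => r.take k) := by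
          haveI : IsAntisymm (List α) (· ≤ ·) := ⟨fun _ _ h h' => le_antisymm h h'⟩
          refine List.Perm.eq_of_pairwise (le := (· ≤ ·)) (fun _ _ _ _ h h' => le_antisymm h h')
            ?_ ?_ ((hLp.map _).trans (ih.trans (hL'p.map _).symm))
          · exact (sorted_msort l).map _ (fun a b h => take_le_take h k)
          · exact (sorted_msort l').map _ (fun a b h => take_le_take h k)
        calc l.map (fun r => r.take (k+1))
            ~ (l.map (fun r => r.rotate (n-1))).map (fun r => r.take (k+1)) := (hc.map _).symm
          _ = l.map (fun r => r.getLastD default :: r.take k) := step2 l hl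
          _ ~ L.map (fun r => r.getLastD default :: r.take k) := (hLp.map _).symm
          _ = L'.map (fun r => r.getLastD default :: r.take k) := by
              rw [map_cons_zipWith, map_cons_zipWith, hlast, htake]
          _ ~ l'.map (fun r => r.getLastD default :: r.take k) := hL'p.map _
          _ = (l'.map (fun r => r.rotate (n-1))).map (fun r => r.take (k+1)) := (step2 l' hl').symm
          _ ~ l'.map (fun r => r.take (k+1)) := hc'.map _
      · push_neg at hk
        have e : ∀ (m : List (List α)), (∀ r ∈ m, r.length = n) →
            m.map (fun r => r.take (k+1)) = m.map (fun r => r.take k) := by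
          intro m hm
          exact List.map_congr_left (fun r hr => by
            rw [List.take_of_length_le (by rw [hm r hr]; omega),
              List.take_of_length_le (by rw [hm r hr]; omega)])
        rw [e l hl, e l' hl']
        exact ih
  have e1 : ∀ (m : List (List α)), (∀ r ∈ m, r.length = n) →
      m.map (fun r => r.take n) = m := by
    intro m hm
    have : m.map (fun r => r.take n) = m.map id :=
      List.map_congr_left (fun r hr => List.take_of_length_le (le_of_eq (hm r hr)))
    simpa using this
  have := main n
  rwa [e1 l hl, e1 l' hl'] at this


variable {α : Type*} [LinearOrder α] [Inhabited α] {β : Type*} {γ : Type*}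


lemma range_mod_perm (p : ℕ) (g : ℕ → γ) (d : ℕ) :
    ((List.range (d * p)).map (fun i => g (i % p))).Perm
      (List.replicate d ((List.range p).map g)).flatten := by
  induction d with
  | zero => simp
  | succ d ih =>
    rw [Nat.succ_mul, List.range_add, List.map_append]
    have h2 : ((List.range p).map (fun x => d * p + x)).map (fun i => g (i % p)) =
        (List.range p).map g := by
      rw [List.map_map]
      refine List.map_congr_left (fun j hj => ?_)
      simp only [Function.comp_apply]
      rw [Nat.add_comm, Nat.add_mul_mod_self_right, Nat.mod_eq_of_lt (List.mem_range.mp hj)]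
    rw [h2]
    calc ((List.range (d*p)).map (fun i => g (i % p))) ++ (List.range p).map g
        ~ (List.replicate d ((List.range p).map g)).flatten ++ (List.range p).map g :=
          ih.append_right _
      _ ~ (List.range p).map g ++ (List.replicate d ((List.range p).map g)).flatten :=
          List.perm_append_comm
      _ = (List.replicate (d+1) ((List.range p).map g)).flatten := by
          rw [List.replicate_succ, List.flatten_cons]

lemma toList_replicate (k : ℕ) (a : γ) :
    (Multiset.replicate k a).toList = List.replicate k a := by
  rw [List.eq_replicate_iff]
  refine ⟨by rw [Multiset.length_toList, Multiset.card_replicate], fun b hb => ?_⟩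
  exact Multiset.eq_of_mem_replicate (by rwa [← Multiset.mem_toList])

lemma foldr_lcm (p d : ℕ) : (List.replicate (d+1) p).foldr Nat.lcm 1 = p := by
  induction d with
  | zero => simp [Nat.lcm_one_right]
  | succ d ih => rw [List.replicate_succ, List.foldr_cons, ih, Nat.lcm_self]

lemma ebwt_replicate (t : List α) (ht : t ≠ []) (d : ℕ) :
    ebwt (Multiset.replicate (d+1) t) =
      (((List.replicate (d+1) (rws t)).flatten).mergeSort (fun a b => decide (a ≤ b))).map
        (fun l => l.getLastD default) := by
  have hp : 0 < t.length := List.length_pos_iff.mpr ht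
  have hc : (((Multiset.replicate (d+1) t).map List.length).toList).foldr Nat.lcm 1
      = t.length := by
    rw [Multiset.map_replicate, toList_replicate, foldr_lcm]
  unfold ebwt
  rw [hc, toList_replicate]
  congr 2
  rw [List.flatMap_def, List.map_replicate]
  congr 1
  rw [rws]
  congr 1
  refine List.map_congr_left (fun j _ => ?_)
  rw [Nat.div_self hp]
  simp


lemma antisymmList : IsAntisymm (List α) (· ≤ ·) := ⟨fun _ _ h h' => le_antisymm h h'⟩

lemma bwt_pw (t : List α) (ht : t ≠ []) (d : ℕ) :
    bwt (pw d t) = ebwt (Multiset.replicate d t) := by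
  have hp : 0 < t.length := List.length_pos_iff.mpr ht
  cases d with
  | zero =>
    show bwt [] = ebwt (Multiset.replicate 0 t)
    rw [Multiset.replicate_zero]
    unfold bwt ebwt
    simp
  | succ d =>
    haveI : IsAntisymm (List α) (· ≤ ·) := antisymmList
    rw [ebwt_replicate t ht d]
    set E := (List.replicate (d+1) (rws t)).flatten with hE
    have hmemE : ∀ r ∈ E, r.length = t.length := by
      intro r hr
      rw [hE, List.mem_flatten] at hr
      obtain ⟨l, hl, hrl⟩ := hr
      rw [List.eq_of_mem_replicate hl] at hrl
      exact length_of_mem_rws hrl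
    have hrowsB : rws (pw (d+1) t) =
        (List.range ((d+1) * t.length)).map (fun i => pw (d+1) (t.rotate (i % t.length))) := by
      simp only [rws, length_pw]
      exact List.map_congr_left (fun i _ => rotate_pw_mod ht (d+1) i)
    have hmapE : E.map (pw (d+1)) =
        (List.replicate (d+1) ((List.range t.length).map
          (fun j => pw (d+1) (t.rotate j)))).flatten := by
      rw [hE, List.map_flatten, List.map_replicate, rws, List.map_map]
      rfl
    have hperm : (rws (pw (d+1) t)).Perm (E.map (pw (d+1))) := by
      rw [hrowsB, hmapE]
      exact range_mod_perm t.length (fun j => pw (d+1) (t.rotate j)) (d+1)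
    have hsorted : List.Pairwise (· ≤ ·)
        ((E.mergeSort (fun a b => decide (a ≤ b))).map (pw (d+1))) := by
      refine List.pairwise_map.mpr ?_
      refine (sorted_msort E).imp_of_mem ?_
      intro a b ha hb hab
      exact pw_le_pw (d+1)
        (by rw [hmemE a (List.mem_mergeSort.mp ha), hmemE b (List.mem_mergeSort.mp hb)]) hab
    have hmsB : (rws (pw (d+1) t)).mergeSort (fun a b => decide (a ≤ b)) =
        (E.mergeSort (fun a b => decide (a ≤ b))).map (pw (d+1)) := by
      refine List.Perm.eq_of_pairwise (le := (· ≤ ·)) (fun _ _ _ _ h h' => le_antisymm h h') (sorted_msort _) hsorted ?_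
      exact (List.mergeSort_perm _ _).trans
        (hperm.trans ((List.mergeSort_perm E _).map _).symm)
    calc bwt (pw (d+1) t)
        = ((rws (pw (d+1) t)).mergeSort (fun a b => decide (a ≤ b))).map
            (fun l => l.getLastD default) := rfl
      _ = ((E.mergeSort (fun a b => decide (a ≤ b))).map (pw (d+1))).map
            (fun l => l.getLastD default) := by rw [hmsB]
      _ = (E.mergeSort (fun a b => decide (a ≤ b))).map (fun l => l.getLastD default) := by
          rw [List.map_map]
          refine List.map_congr_left (fun r hr => ?_)
          have hrne : r ≠ [] := by
            rw [← List.length_pos_iff, hmemE r (List.mem_mergeSort.mp hr)]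
            exact hp
          exact getLastD_pw hrne (Nat.succ_pos d)

lemma div_arith {p n : ℕ} (hp : 0 < p) (hd : p ∣ n) (hn : 0 < n) :
    (n - p) / p + 1 = n / p := by
  obtain ⟨k, rfl⟩ := hd
  have hk : 0 < k := by
    rcases Nat.eq_zero_or_pos k with rfl | h
    · simp at hn
    · exact h
  have h1 : p * k - p = p * (k - 1) := by
    cases k with
    | zero => omega
    | succ k => rw [Nat.mul_succ]; simp
  rw [h1, Nat.mul_div_cancel_left _ hp, Nat.mul_div_cancel_left _ hp]
  omega

lemma pow_of_comm [DecidableEq β] (u : List β) (hu : u ≠ []) :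
    ∀ (m : ℕ) (v : List β), v.length = m → u.length ∣ m → u ++ v = v ++ u →
      v = pw (m / u.length) u := by
  intro m
  induction m using Nat.strong_induction_on with
  | _ m ih =>
    intro v hv hdvd hcomm
    rcases Nat.eq_zero_or_pos m with rfl | hm
    · have hv0 : v = [] := List.length_eq_zero_iff.mp hv
      subst hv0; simp
    · have hu0 : 0 < u.length := List.length_pos_iff.mpr hu
      have hum : u.length ≤ m := Nat.le_of_dvd hm hdvd
      have htk : v.take u.length = u := by
        have h1 : (u ++ v).take u.length = u := by
          rw [List.take_append_of_le_length le_rfl, List.take_length]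
        rw [hcomm, List.take_append_of_le_length (by omega : u.length ≤ v.length)] at h1
        exact h1
      have hveq : v = u ++ v.drop u.length := by
        conv_lhs => rw [← List.take_append_drop u.length v]
        rw [htk]
      have hcomm' : u ++ v.drop u.length = v.drop u.length ++ u := by
        have h2 : u ++ (u ++ v.drop u.length) = u ++ (v.drop u.length ++ u) := by
          conv_lhs => rw [← hveq]
          rw [hcomm]
          conv_lhs => rw [hveq]
          simp [List.append_assoc]
        exact List.append_cancel_left h2
      have hlen' : (v.drop u.length).length = m - u.length := by simp [hv]
      have ihv := ih (m - u.length) (by omega) (v.drop u.length) hlen'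
        (Nat.dvd_sub hdvd dvd_rfl) hcomm'
      rw [hveq, ihv, ← pw_succ, div_arith hu0 hdvd hm]

lemma exists_primitive_root [DecidableEq β] (s : List β) (hs : s ≠ []) :
    ∃ (t : List β) (d : ℕ), Primitive t ∧ s = pw d t := by
  classical
  have hn : 0 < s.length := List.length_pos_iff.mpr hs
  have H : ∃ k, 0 < k ∧ s.rotate k = s := ⟨s.length, hn, List.rotate_length s⟩
  set p := Nat.find H with hpdef
  obtain ⟨hp0, hps⟩ : 0 < p ∧ s.rotate p = s := Nat.find_spec H
  have hpn : p ≤ s.length := Nat.find_le ⟨hn, List.rotate_length s⟩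
  have hrotmul : ∀ q, s.rotate (q * p) = s := by
    intro q; induction q with
    | zero => simp
    | succ q ih => rw [Nat.succ_mul, ← List.rotate_rotate, ih, hps]
  have hdvd : p ∣ s.length := by
    rcases Nat.eq_zero_or_pos (s.length % p) with h0 | hposm
    · exact Nat.dvd_of_mod_eq_zero h0
    · exfalso
      have h1 : s.rotate (s.length % p) = s := by
        calc s.rotate (s.length % p)
            = (s.rotate ((s.length / p) * p)).rotate (s.length % p) := by rw [hrotmul]
          _ = s.rotate ((s.length / p) * p + s.length % p) := List.rotate_rotate _ _ _
          _ = s.rotate s.length := by rw [Nat.mul_comm, Nat.div_add_mod]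
          _ = s := List.rotate_length s
      exact Nat.find_min H (Nat.mod_lt _ hp0) ⟨hposm, h1⟩
  set u := s.take p with hu
  have hul : u.length = p := by rw [hu, List.length_take, min_eq_left hpn]
  have hune : u ≠ [] := by rw [← List.length_pos_iff, hul]; exact hp0
  have hcomm : u ++ s.drop p = s.drop p ++ u := by
    have h1 : s.rotate p = s.drop p ++ s.take p := List.rotate_eq_drop_append_take hpn
    rw [hps] at h1
    calc u ++ s.drop p = s := by rw [hu, List.take_append_drop]
      _ = s.drop p ++ u := by rw [hu]; exact h1
  have hdl : (s.drop p).length = s.length - p := by simp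
  have hsv := pow_of_comm u hune (s.length - p) (s.drop p) hdl
    (by rw [hul]; exact Nat.dvd_sub hdvd dvd_rfl) hcomm
  rw [hul] at hsv
  have hspw : s = pw (s.length / p) u := by
    calc s = u ++ s.drop p := by rw [hu, List.take_append_drop]
      _ = u ++ pw ((s.length - p) / p) u := by rw [hsv]
      _ = pw ((s.length - p) / p + 1) u := (pw_succ _ u).symm
      _ = pw (s.length / p) u := by rw [div_arith hp0 hdvd hn]
  refine ⟨u, s.length / p, ⟨hune, ?_⟩, hspw⟩
  intro m hm0 hmu hrm
  have hmp : m < p := by rwa [hul] at hmu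
  have hsm : s.rotate m = s := by
    calc s.rotate m = (pw (s.length / p) u).rotate m := by rw [← hspw]
      _ = pw (s.length / p) (u.rotate m) := rotate_pw (by rw [hul]; omega) _
      _ = pw (s.length / p) u := by rw [hrm]
      _ = s := hspw.symm
  exact Nat.find_min H hmp ⟨hm0, hsm⟩

end BWTProof

/-- A word w of length n is in the image of the Burrows–Wheeler
transform iff the inverse Extended Burrows–Wheeler Transform of w is a multiset
consisting of d copies of a single aperiodic cycle (t) for some primitive word
t with d·|t| = n (i.e. iff EBWT of such a multiset equals w); and in that case
BWT⁻¹(w) = t^d up to rotation (any s with BWT(s) = w is a rotation of t^d). -/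

theorem bwt_image_iff_ebwt_inv_single_cycle (α : Type*) [LinearOrder α] [Inhabited α]
    (w : List α) :
    ((∃ s : List α, s.length = w.length ∧ bwt s = w) ↔
      (∃ (t : List α) (d : ℕ), Primitive t ∧ d * t.length = w.length ∧
        ebwt (Multiset.replicate d t) = w))
    ∧ ∀ (t : List α) (d : ℕ), Primitive t → d * t.length = w.length →
        ebwt (Multiset.replicate d t) = w →
        ∀ s : List α, s.length = w.length → bwt s = w →
          ∃ j : ℕ, s = ((List.replicate d t).flatten).rotate j := by
  classical
  constructor
  · constructor
    · rintro ⟨s, hslen, hsw⟩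
      rcases eq_or_ne s [] with rfl | hs
      · have hw : w = [] := List.length_eq_zero_iff.mp (by simpa using hslen.symm)
        refine ⟨[default], 0, ⟨List.cons_ne_nil _ _, ?_⟩, by simp [hw], ?_⟩
        · intro n h1 h2
          simp at h2
          omega
        · rw [← BWTProof.bwt_pw [default] (List.cons_ne_nil _ _) 0]
          simp [bwt, BWTProof.pw]
          exact hw
      · obtain ⟨t, d, hprim, hspw⟩ := BWTProof.exists_primitive_root s hs
        refine ⟨t, d, hprim, ?_, ?_⟩
        · rw [← hslen, hspw]
          exact (BWTProof.length_pw d t).symm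
        · rw [← BWTProof.bwt_pw t hprim.1 d, ← hspw, hsw]
    · rintro ⟨t, d, hprim, hlen, hew⟩
      refine ⟨BWTProof.pw d t, ?_, ?_⟩
      · rw [BWTProof.length_pw, hlen]
      · rw [BWTProof.bwt_pw t hprim.1 d, hew]
  · intro t d hprim hlen hew s hslen hbwt
    rcases Nat.eq_zero_or_pos w.length with h0 | hpos
    · have hd : d = 0 := by
        have ht : 0 < t.length := List.length_pos_iff.mpr hprim.1
        nlinarith [hlen]
      refine ⟨0, ?_⟩
      subst hd
      have : s = [] := List.length_eq_zero_iff.mp (by omega)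
      rw [this]
      simp
    · have hb2 : bwt (BWTProof.pw d t) = w := by
        rw [BWTProof.bwt_pw t hprim.1 d, hew]
      have hlens : (BWTProof.pw d t).length = w.length := by
        rw [BWTProof.length_pw, hlen]
      have hsne : s ≠ [] := by
        rw [← List.length_pos_iff, hslen]; exact hpos
      have hpne : BWTProof.pw d t ≠ [] := by
        rw [← List.length_pos_iff, hlens]; exact hpos
      have hperm : (BWTProof.rws s).Perm (BWTProof.rws (BWTProof.pw d t)) := by
        refine BWTProof.key_perm (n := w.length) hpos ?_ ?_ ?_ ?_ ?_
        · intro r hr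
          rw [BWTProof.length_of_mem_rws hr, hslen]
        · intro r hr
          rw [BWTProof.length_of_mem_rws hr, hlens]
        · exact BWTProof.rws_rotate_perm s (w.length - 1)
        · exact BWTProof.rws_rotate_perm (BWTProof.pw d t) (w.length - 1)
        · show bwt s = bwt (BWTProof.pw d t)
          rw [hbwt, hb2]
      have hmem : s ∈ BWTProof.rws (BWTProof.pw d t) :=
        hperm.mem_iff.mp (BWTProof.self_mem_rws hsne)
      obtain ⟨j, hj⟩ := BWTProof.mem_rws hmem
      exact ⟨j, hj⟩
end
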